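/- arXiv:1412.8073 — 11 statements merged into one kernel-verified Lean document; each statement's English description precedes it below -/
import Mathlib

section
/- Let μ : ℝ → ℂ be measurable and 2π-periodic with ess sup |μ| < 1, and let p : [0,2π] → ℝ be measurable with p(θ) > 0 a.e. and p ∈ L²[0,2π] with ∫₀^{2π} p dθ > 0. Define a₀(θ) = |e^{2iθ} − μ(θ)|²/(1 − |μ(θ)|²) and a₁(θ) = |e^{2iθ} + μ(θ)|²/(1 − |μ(θ)|²), and set g₀ = (1/2π)∫₀^{2π} a₀(θ) dθ and g₁ = [(1/2π)∫₀^{2π} a₁(θ)p(θ)² dθ] / [(1/2π)∫₀^{2π} p(θ) dθ]². Then g₀ · g₁ ≥ 1. -/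
open MeasureTheory
open scoped Real

set_option maxHeartbeats 1000000

/-- the geometric factors `g₀, g₁` built from a quasiconformal dilatation `μ`
(depending only on the angle, with essential sup of its modulus less than 1) and a positive
boundary weight `p ∈ L²[0,2π]` satisfy `g₀ · g₁ ≥ 1`. -/
theorem stmt_0 (μ : ℝ → ℂ) (p : ℝ → ℝ)
    (hμ_meas : Measurable μ)
    (hμ_per : ∀ θ : ℝ, μ (θ + 2 * π) = μ θ)
    (hμ_bd : ∃ M : ℝ, M < 1 ∧ ∀ᵐ θ : ℝ ∂volume, ‖μ θ‖ ≤ M)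
    (hp_meas : Measurable p)
    (hp_pos : ∀ᵐ θ ∂(volume.restrict (Set.Ioc (0:ℝ) (2*π))), 0 < p θ)
    (hp_L2 : IntegrableOn (fun θ => (p θ)^2) (Set.Ioc (0:ℝ) (2*π)))
    (hp_int : 0 < ∫ θ in Set.Ioc (0:ℝ) (2*π), p θ) :
    let a₀ : ℝ → ℝ := fun θ =>
      ‖Complex.exp (2*θ*Complex.I) - μ θ‖^2 / (1 - (‖μ θ‖)^2)
    let a₁ : ℝ → ℝ := fun θ =>
      ‖Complex.exp (2*θ*Complex.I) + μ θ‖^2 / (1 - (‖μ θ‖)^2)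
    let g₀ : ℝ := (1/(2*π)) * ∫ θ in Set.Ioc (0:ℝ) (2*π), a₀ θ
    let g₁ : ℝ := ((1/(2*π)) * ∫ θ in Set.Ioc (0:ℝ) (2*π), a₁ θ * (p θ)^2) /
      ((1/(2*π)) * ∫ θ in Set.Ioc (0:ℝ) (2*π), p θ)^2
    1 ≤ g₀ * g₁ := by
  intro a₀ a₁ g₀ g₁
  have ha₀ : a₀ = fun θ : ℝ =>
      (‖Complex.exp (2*(θ:ℂ)*Complex.I) - μ θ‖)^2 / (1 - (‖μ θ‖)^2) := rfl
  have ha₁ : a₁ = fun θ : ℝ =>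
      (‖Complex.exp (2*(θ:ℂ)*Complex.I) + μ θ‖)^2 / (1 - (‖μ θ‖)^2) := rfl
  set s : Set ℝ := Set.Ioc (0:ℝ) (2*π) with hs_def
  obtain ⟨M₀, hM₀, hbd₀⟩ := hμ_bd
  set M : ℝ := max M₀ 0 with hM_def
  have hM1 : M < 1 := max_lt hM₀ one_pos
  have hM0 : 0 ≤ M := le_max_right _ _
  have hbd : ∀ᵐ θ ∂(volume.restrict s), ‖μ θ‖ ≤ M :=
    ae_restrict_of_ae (hbd₀.mono fun θ h => le_trans h (le_max_left _ _))
  have habs1 : ∀ θ : ℝ, ‖Complex.exp (2*(θ:ℂ)*Complex.I)‖ = 1 := by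
    intro θ
    rw [Complex.norm_exp]
    simp
  -- pointwise facts
  have hDpos : ∀ θ : ℝ, ‖μ θ‖ ≤ M → 0 < 1 - ‖μ θ‖^2 := by
    intro θ hθ
    nlinarith [norm_nonneg (μ θ)]
  have hDge : ∀ θ : ℝ, ‖μ θ‖ ≤ M → 1 - M^2 ≤ 1 - ‖μ θ‖^2 := by
    intro θ hθ
    nlinarith [norm_nonneg (μ θ)]
  have hM2 : 0 < 1 - M^2 := by nlinarith
  have ha₀_nonneg : ∀ θ : ℝ, ‖μ θ‖ ≤ M → 0 ≤ a₀ θ := by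
    intro θ hθ
    rw [ha₀]
    have := hDpos θ hθ
    positivity
  have ha₁_nonneg : ∀ θ : ℝ, ‖μ θ‖ ≤ M → 0 ≤ a₁ θ := by
    intro θ hθ
    rw [ha₁]
    have := hDpos θ hθ
    positivity
  have key : ∀ θ : ℝ, ‖μ θ‖ ≤ M → 1 ≤ a₀ θ * a₁ θ := by
    intro θ hθ
    have hD := hDpos θ hθ
    have e1 : ‖Complex.exp (2*(θ:ℂ)*Complex.I) - μ θ‖
        * ‖Complex.exp (2*(θ:ℂ)*Complex.I) + μ θ‖
        = ‖(Complex.exp (2*(θ:ℂ)*Complex.I))^2 - (μ θ)^2‖ := by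
      rw [← norm_mul]
      congr 1
      ring
    have e2 : 1 - ‖μ θ‖^2
        ≤ ‖(Complex.exp (2*(θ:ℂ)*Complex.I))^2 - (μ θ)^2‖ := by
      have h := norm_sub_norm_le ((Complex.exp (2*(θ:ℂ)*Complex.I))^2) ((μ θ)^2)
      simp only [norm_pow, habs1 θ, one_pow] at h
      exact h
    have hprod : a₀ θ * a₁ θ
        = (‖(Complex.exp (2*(θ:ℂ)*Complex.I))^2 - (μ θ)^2‖)^2
          / (1 - ‖μ θ‖^2)^2 := by
      rw [ha₀, ha₁]
      rw [div_mul_div_comm, ← mul_pow, e1, ← pow_two]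
    rw [hprod, le_div_iff₀ (by positivity)]
    nlinarith [norm_nonneg ((Complex.exp (2*(θ:ℂ)*Complex.I))^2 - (μ θ)^2)]
  have hbound₀ : ∀ θ : ℝ, ‖μ θ‖ ≤ M → a₀ θ ≤ 4 / (1 - M^2) := by
    intro θ hθ
    have hD := hDpos θ hθ
    have hN : ‖Complex.exp (2*(θ:ℂ)*Complex.I) - μ θ‖ ≤ 2 := by
      have h := norm_sub_le (Complex.exp (2*(θ:ℂ)*Complex.I)) (μ θ)
      simp only [habs1 θ] at h
      nlinarith
    rw [ha₀]
    exact div_le_div₀ (by norm_num)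
      (by nlinarith [norm_nonneg (Complex.exp (2*(θ:ℂ)*Complex.I) - μ θ)])
      hM2 (hDge θ hθ)
  have hbound₁ : ∀ θ : ℝ, ‖μ θ‖ ≤ M → a₁ θ ≤ 4 / (1 - M^2) := by
    intro θ hθ
    have hD := hDpos θ hθ
    have hN : ‖Complex.exp (2*(θ:ℂ)*Complex.I) + μ θ‖ ≤ 2 := by
      have h := norm_add_le (Complex.exp (2*(θ:ℂ)*Complex.I)) (μ θ)
      simp only [habs1 θ] at h
      nlinarith
    rw [ha₁]
    exact div_le_div₀ (by norm_num)
      (by nlinarith [norm_nonneg (Complex.exp (2*(θ:ℂ)*Complex.I) + μ θ)])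
      hM2 (hDge θ hθ)
  -- measurability
  have hexp_meas : Measurable fun θ : ℝ => Complex.exp (2*(θ:ℂ)*Complex.I) := by
    exact Complex.measurable_exp.comp
      ((Complex.measurable_ofReal.const_mul 2).mul_const Complex.I)
  have hμabs : Measurable fun θ => ‖μ θ‖ :=
    continuous_norm.measurable.comp hμ_meas
  have ha₀m : Measurable a₀ := by
    rw [ha₀]
    exact ((continuous_norm.measurable.comp (hexp_meas.sub hμ_meas)).pow_const 2).div
      ((measurable_const.sub (hμabs.pow_const 2)))
  have ha₁m : Measurable a₁ := by
    rw [ha₁]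
    exact ((continuous_norm.measurable.comp (hexp_meas.add hμ_meas)).pow_const 2).div
      ((measurable_const.sub (hμabs.pow_const 2)))
  have hsfin : volume s < ⊤ := measure_Ioc_lt_top
  haveI : IsFiniteMeasure (volume.restrict s) :=
    ⟨by rwa [Measure.restrict_apply_univ]⟩
  -- integrability
  have hint_a₀ : IntegrableOn a₀ s := by
    refine Integrable.mono' (g := fun _ => 4 / (1 - M^2))
      (integrableOn_const hsfin.ne) ha₀m.aestronglyMeasurable.restrict ?_
    filter_upwards [hbd] with θ hθ
    rw [Real.norm_of_nonneg (ha₀_nonneg θ hθ)]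
    exact hbound₀ θ hθ
  have hint_a₁p : IntegrableOn (fun θ => a₁ θ * (p θ)^2) s := by
    refine Integrable.mono' (g := fun θ => 4 / (1 - M^2) * (p θ)^2)
      (hp_L2.const_mul _) ((ha₁m.mul (hp_meas.pow_const 2)).aestronglyMeasurable.restrict) ?_
    filter_upwards [hbd] with θ hθ
    rw [Real.norm_of_nonneg (mul_nonneg (ha₁_nonneg θ hθ) (sq_nonneg _))]
    exact mul_le_mul_of_nonneg_right (hbound₁ θ hθ) (sq_nonneg _)
  have hint_p : IntegrableOn p s :=
    ((memLp_two_iff_integrable_sq hp_meas.aestronglyMeasurable.restrict).2 hp_L2).integrable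
      one_le_two
  -- the Cauchy-Schwarz setup
  set F : ℝ → ℝ := fun θ => Real.sqrt (a₀ θ) with hF_def
  set G : ℝ → ℝ := fun θ => Real.sqrt (a₁ θ) * p θ with hG_def
  have hFm : Measurable F := ha₀m.sqrt
  have hGm : Measurable G := ha₁m.sqrt.mul hp_meas
  have hF2 : (fun θ => F θ ^ 2) =ᵐ[volume.restrict s] a₀ := by
    filter_upwards [hbd] with θ hθ
    exact Real.sq_sqrt (ha₀_nonneg θ hθ)
  have hG2 : (fun θ => G θ ^ 2) =ᵐ[volume.restrict s] fun θ => a₁ θ * (p θ)^2 := by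
    filter_upwards [hbd] with θ hθ
    simp only [hG_def, mul_pow]
    rw [Real.sq_sqrt (ha₁_nonneg θ hθ)]
  have hFmem : MemLp F 2 (volume.restrict s) :=
    (memLp_two_iff_integrable_sq hFm.aestronglyMeasurable.restrict).2 (hint_a₀.congr hF2.symm)
  have hGmem : MemLp G 2 (volume.restrict s) :=
    (memLp_two_iff_integrable_sq hGm.aestronglyMeasurable.restrict).2 (hint_a₁p.congr hG2.symm)
  have h1 : Integrable (fun θ => F θ ^ 2) (volume.restrict s) := hFmem.integrable_sq
  have h2 : Integrable (fun θ => G θ ^ 2) (volume.restrict s) := hGmem.integrable_sq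
  have hsum : Integrable (fun θ => (F θ ^ 2 + G θ ^ 2) / 2) (volume.restrict s) :=
    (h1.add h2).div_const 2
  have hint_FG : IntegrableOn (fun θ => F θ * G θ) s := by
    refine Integrable.mono' hsum (hFm.mul hGm).aestronglyMeasurable.restrict ?_
    refine Filter.Eventually.of_forall fun θ => ?_
    rw [Real.norm_eq_abs, abs_mul]
    nlinarith [sq_nonneg (|F θ| - |G θ|), sq_abs (F θ), sq_abs (G θ)]
  have step1 : (∫ θ in s, p θ) ≤ ∫ θ in s, F θ * G θ := by
    refine integral_mono_ae hint_p hint_FG ?_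
    filter_upwards [hbd, hp_pos] with θ hθ hpθ
    have h1 : 1 ≤ Real.sqrt (a₀ θ * a₁ θ) := by
      rw [show (1:ℝ) = Real.sqrt 1 by simp]
      exact Real.sqrt_le_sqrt (by simpa using key θ hθ)
    calc p θ = 1 * p θ := (one_mul _).symm
      _ ≤ Real.sqrt (a₀ θ * a₁ θ) * p θ := mul_le_mul_of_nonneg_right h1 hpθ.le
      _ = F θ * G θ := by
          rw [Real.sqrt_mul (ha₀_nonneg θ hθ)]
          simp [hF_def, hG_def, mul_assoc]
  have hpq : Real.HolderConjugate 2 2 := Real.HolderConjugate.two_two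
  have h2 : ENNReal.ofReal (2:ℝ) = 2 := by
    rw [show (2:ℝ) = ((2:ℕ):ℝ) by norm_num, ENNReal.ofReal_natCast]
    norm_num
  have holder := integral_mul_le_Lp_mul_Lq_of_nonneg (μ := volume.restrict s) hpq
    (Filter.Eventually.of_forall fun θ => Real.sqrt_nonneg _)
    (by filter_upwards [hbd, hp_pos] with θ hθ hpθ
        exact mul_nonneg (Real.sqrt_nonneg _) hpθ.le)
    (h2 ▸ hFmem) (h2 ▸ hGmem)
  have hrw : ∀ x : ℝ, x ^ (2:ℝ) = x ^ 2 := fun x => by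
    rw [show (2:ℝ) = ((2:ℕ):ℝ) by norm_num, Real.rpow_natCast]
  set A : ℝ := ∫ θ in s, a₀ θ with hA_def
  set B : ℝ := ∫ θ in s, a₁ θ * (p θ)^2 with hB_def
  set P : ℝ := ∫ θ in s, p θ with hP_def
  have eqA : (∫ θ in s, F θ ^ (2:ℝ)) = A := by
    rw [hA_def]
    refine integral_congr_ae ?_
    filter_upwards [hF2] with θ hθ
    rw [hrw (F θ), hθ]
  have eqB : (∫ θ in s, G θ ^ (2:ℝ)) = B := by
    rw [hB_def]
    refine integral_congr_ae ?_
    filter_upwards [hG2] with θ hθ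
    rw [hrw (G θ), hθ]
  rw [eqA, eqB] at holder
  have hA0 : 0 ≤ A := by
    rw [hA_def]
    refine integral_nonneg_of_ae ?_
    filter_upwards [hbd] with θ hθ
    exact ha₀_nonneg θ hθ
  have hB0 : 0 ≤ B := by
    rw [hB_def]
    refine integral_nonneg_of_ae ?_
    filter_upwards [hbd] with θ hθ
    exact mul_nonneg (ha₁_nonneg θ hθ) (sq_nonneg _)
  have hP0 : 0 < P := hp_int
  have step2 : P ≤ A ^ ((1:ℝ)/2) * B ^ ((1:ℝ)/2) := le_trans step1 (by exact_mod_cast holder)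
  have hsq : (A ^ ((1:ℝ)/2) * B ^ ((1:ℝ)/2))^2 = A * B := by
    rw [mul_pow, ← hrw (A ^ ((1:ℝ)/2)), ← hrw (B ^ ((1:ℝ)/2)),
      ← Real.rpow_mul hA0, ← Real.rpow_mul hB0]
    norm_num
  have hP2 : P^2 ≤ A * B := by
    rw [← hsq]
    exact pow_le_pow_left₀ hP0.le step2 2
  have hπ : 0 < π := Real.pi_pos
  have hexpr : g₀ * g₁ = (A * B) / P^2 := by
    show ((1/(2*π)) * A) * (((1/(2*π)) * B) / ((1/(2*π)) * P)^2) = (A * B) / P^2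
    field_simp
  rw [hexpr, le_div_iff₀ (by positivity)]
  linarith
end

section
/- Let μ : ℝ → ℂ be measurable and 2π-periodic with ess sup |μ| < 1, and let p : [0,2π] → ℝ be measurable with p(θ) > 0 a.e. and p ∈ L²[0,2π] with ∫₀^{2π} p dθ > 0. Define a₀(θ) = |e^{2iθ} − μ(θ)|²/(1 − |μ(θ)|²) and a₁(θ) = |e^{2iθ} + μ(θ)|²/(1 − |μ(θ)|²), g₀ = (1/2π)∫₀^{2π} a₀ dθ and g₁ = [(1/2π)∫₀^{2π} a₁ p² dθ] / [(1/2π)∫₀^{2π} p dθ]². If g₀ · g₁ = 1, then for almost every θ the number e^{−2iθ}μ(θ) is real with e^{−2iθ}μ(θ) ∈ (−1,1), and there exists a constant c > 0 such that p(θ) = c · a₀(θ) for almost every θ. -/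
open MeasureTheory
open scoped Real

private lemma auxB (u : ℂ) (h : ‖1 - u^2‖ = 1 - (‖u‖)^2) :
    u.im = 0 := by
  have h2 : Complex.normSq (1 - u^2) = (1 - Complex.normSq u)^2 := by
    rw [← Complex.sq_norm, ← Complex.sq_norm u, h]
  have hr : u.im ^ 2 = 0 := by
    simp only [Complex.normSq_apply, Complex.sub_re, Complex.sub_im, Complex.one_re,
      Complex.one_im, pow_two, Complex.mul_re, Complex.mul_im] at h2
    nlinarith [h2]
  exact pow_eq_zero_iff two_ne_zero |>.mp hr

private lemma auxC (M : ℝ) (hM1 : M < 1) (θ : ℝ) (m : ℂ) (hm : ‖m‖ ≤ M)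
    (h : ((‖Complex.exp (2*θ*Complex.I) - m‖)^2 / (1 - (‖m‖)^2)) *
         ((‖Complex.exp (2*θ*Complex.I) + m‖)^2 / (1 - (‖m‖)^2)) = 1) :
    (Complex.exp (-(2*θ)*Complex.I) * m).im = 0 ∧
    (Complex.exp (-(2*θ)*Complex.I) * m).re ∈ Set.Ioo (-1:ℝ) 1 := by
  set z : ℂ := Complex.exp (2*θ*Complex.I) with hzdef
  have hz : ‖z‖ = 1 := by
    rw [hzdef, show (2*(θ:ℂ)*Complex.I) = ((2*θ:ℝ):ℂ)*Complex.I by push_cast; ring]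
    exact Complex.norm_exp_ofReal_mul_I _
  have hzne : z ≠ 0 := Complex.exp_ne_zero _
  have hminv : Complex.exp (-(2*θ)*Complex.I) = z⁻¹ := by
    rw [hzdef, ← Complex.exp_neg]
    ring_nf
  set w : ℂ := Complex.exp (-(2*θ)*Complex.I) * m with hwdef
  have hmw : m = z * w := by
    rw [hwdef, hminv]
    field_simp
  have habs_w : ‖w‖ = ‖m‖ := by
    rw [hwdef, hminv, norm_mul, norm_inv, hz]; simp
  have hmlt : ‖m‖ < 1 := lt_of_le_of_lt hm hM1
  have hD : 0 < 1 - (‖m‖)^2 := by nlinarith [norm_nonneg m]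
  have hnum : (‖z - m‖)^2 * (‖z + m‖)^2 = (1 - (‖m‖)^2)^2 := by
    field_simp at h
    linarith [h]
  have hfac : ‖z^2 - m^2‖ ^ 2 = (1 - (‖m‖)^2)^2 := by
    have : z^2 - m^2 = (z - m) * (z + m) := by ring
    rw [this, norm_mul, mul_pow, hnum]
  have habs_eq : ‖z^2 - m^2‖ = 1 - (‖m‖)^2 := by
    nlinarith [norm_nonneg (z^2 - m^2), hfac, hD]
  have hkey : ‖1 - w^2‖ = 1 - (‖w‖)^2 := by
    have h1 : z^2 - m^2 = z^2 * (1 - w^2) := by rw [hmw]; ring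
    have h2 : ‖z^2 * (1 - w^2)‖ = ‖1 - w^2‖ := by
      rw [norm_mul, norm_pow, hz]; simp
    rw [habs_w, ← habs_eq, h1, h2]
  have him : w.im = 0 := auxB w hkey
  refine ⟨him, ?_, ?_⟩
  · have h3 := Complex.abs_re_le_norm w
    rw [habs_w] at h3
    have h4 := abs_le.mp (le_trans h3 hm)
    linarith [h4.1]
  · have h3 := Complex.abs_re_le_norm w
    rw [habs_w] at h3
    have h4 := abs_le.mp (le_trans h3 hm)
    linarith [h4.2]

private lemma auxBounds (M : ℝ) (hM0 : 0 ≤ M) (hM1 : M < 1) (z m : ℂ)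
    (hz : ‖z‖ = 1) (hm : ‖m‖ ≤ M) :
    (1-M)^2 ≤ (‖z - m‖)^2 / (1 - (‖m‖)^2) ∧
    (‖z - m‖)^2 / (1 - (‖m‖)^2) ≤ (1+M)^2/(1-M^2) ∧
    (1-M)^2 ≤ (‖z + m‖)^2 / (1 - (‖m‖)^2) ∧
    (‖z + m‖)^2 / (1 - (‖m‖)^2) ≤ (1+M)^2/(1-M^2) ∧
    1 ≤ ((‖z - m‖)^2 / (1 - (‖m‖)^2)) *
        ((‖z + m‖)^2 / (1 - (‖m‖)^2)) := by
  have hm0 : 0 ≤ ‖m‖ := norm_nonneg m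
  have hD : 0 < 1 - (‖m‖)^2 := by nlinarith
  have hDM : 0 < 1 - M^2 := by nlinarith
  have hDle : 1 - (‖m‖)^2 ≤ 1 := by nlinarith
  have hDge : 1 - M^2 ≤ 1 - (‖m‖)^2 := by nlinarith
  have hsub_lo : 1 - M ≤ ‖z - m‖ := by
    have := norm_sub_norm_le z m; linarith [hz ▸ this]
  have hsub_hi : ‖z - m‖ ≤ 1 + M := by
    have h1 := norm_add_le z (-m)
    rw [norm_neg] at h1
    have h2 : z - m = z + (-m) := by ring
    rw [h2]; linarith
  have hadd_lo : 1 - M ≤ ‖z + m‖ := by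
    have := norm_sub_le_norm_add z m; linarith
  have hadd_hi : ‖z + m‖ ≤ 1 + M := by
    have := norm_add_le z m; linarith
  have h1M : (0:ℝ) < 1 - M := by linarith
  have hsubnn : 0 ≤ ‖z - m‖ := norm_nonneg _
  have haddnn : 0 ≤ ‖z + m‖ := norm_nonneg _
  have key : 1 - (‖m‖)^2 ≤ ‖z - m‖ * ‖z + m‖ := by
    rw [← norm_mul]
    have h3 : (z - m) * (z + m) = z^2 - m^2 := by ring
    rw [h3]
    have h1 := norm_sub_norm_le (z^2) (m^2)
    rw [norm_pow, norm_pow, hz] at h1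
    nlinarith [h1]
  have hsq1 : (‖z-m‖)^2 ≤ (1+M)^2 := by nlinarith
  have hsq2 : (‖z+m‖)^2 ≤ (1+M)^2 := by nlinarith
  refine ⟨?_, ?_, ?_, ?_, ?_⟩
  · rw [le_div_iff₀ hD]; nlinarith
  · rw [div_le_div_iff₀ hD hDM]
    nlinarith [mul_le_mul_of_nonneg_right hsq1 hD.le,
      mul_le_mul_of_nonneg_left hDge (sq_nonneg (‖z-m‖))]
  · rw [le_div_iff₀ hD]; nlinarith
  · rw [div_le_div_iff₀ hD hDM]
    nlinarith [mul_le_mul_of_nonneg_right hsq2 hD.le,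
      mul_le_mul_of_nonneg_left hDge (sq_nonneg (‖z+m‖))]
  · rw [div_mul_div_comm, le_div_iff₀ (by positivity)]
    nlinarith [mul_nonneg hsubnn haddnn, sq_nonneg (‖z-m‖ * ‖z+m‖)]

/-- equality `g₀ · g₁ = 1` forces `e^{-2iθ} μ(θ)` to be real and in `(-1,1)`
almost everywhere, and forces `p = c · a₀` a.e. for some constant `c > 0`. -/
theorem stmt_1 (μ : ℝ → ℂ) (p : ℝ → ℝ)
    (hμ_meas : Measurable μ)
    (hμ_per : ∀ θ : ℝ, μ (θ + 2 * π) = μ θ)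
    (hμ_bd : ∃ M : ℝ, M < 1 ∧ ∀ᵐ θ : ℝ ∂volume, ‖μ θ‖ ≤ M)
    (hp_meas : Measurable p)
    (hp_pos : ∀ᵐ θ ∂(volume.restrict (Set.Ioc (0:ℝ) (2*π))), 0 < p θ)
    (hp_L2 : IntegrableOn (fun θ => (p θ)^2) (Set.Ioc (0:ℝ) (2*π)))
    (hp_int : 0 < ∫ θ in Set.Ioc (0:ℝ) (2*π), p θ)
    (a₀ : ℝ → ℝ)
    (ha₀ : ∀ θ, a₀ θ =
      ‖Complex.exp (2*θ*Complex.I) - μ θ‖^2 / (1 - (‖μ θ‖)^2))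
    (a₁ : ℝ → ℝ)
    (ha₁ : ∀ θ, a₁ θ =
      ‖Complex.exp (2*θ*Complex.I) + μ θ‖^2 / (1 - (‖μ θ‖)^2))
    (heq : ((1/(2*π)) * ∫ θ in Set.Ioc (0:ℝ) (2*π), a₀ θ) *
      (((1/(2*π)) * ∫ θ in Set.Ioc (0:ℝ) (2*π), a₁ θ * (p θ)^2) /
        ((1/(2*π)) * ∫ θ in Set.Ioc (0:ℝ) (2*π), p θ)^2) = 1) :
    (∀ᵐ θ : ℝ ∂(volume.restrict (Set.Ioc (0:ℝ) (2*π))),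
      (Complex.exp (-(2*θ)*Complex.I) * μ θ).im = 0 ∧
      (Complex.exp (-(2*θ)*Complex.I) * μ θ).re ∈ Set.Ioo (-1:ℝ) 1) ∧
    ∃ c : ℝ, 0 < c ∧
      ∀ᵐ θ ∂(volume.restrict (Set.Ioc (0:ℝ) (2*π))), p θ = c * a₀ θ := by
  obtain ⟨M₀, hM₀1, hμM₀⟩ := hμ_bd
  set M : ℝ := max M₀ 0 with hMdef
  have hM0 : 0 ≤ M := le_max_right _ _
  have hM1 : M < 1 := max_lt hM₀1 one_pos
  set s : Set ℝ := Set.Ioc (0:ℝ) (2*π) with hsdef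
  have hπ : (0:ℝ) < π := Real.pi_pos
  haveI : IsFiniteMeasure (volume.restrict s) := by
    constructor
    rw [Measure.restrict_apply_univ, hsdef, Real.volume_Ioc]
    exact ENNReal.ofReal_lt_top
  have hμM : ∀ᵐ θ ∂(volume.restrict s), ‖μ θ‖ ≤ M :=
    ae_restrict_of_ae (hμM₀.mono fun θ h => h.trans (le_max_left _ _))
  have hzabs : ∀ θ : ℝ, ‖Complex.exp (2*θ*Complex.I)‖ = 1 := fun θ => by
    rw [show (2*(θ:ℂ)*Complex.I) = ((2*θ:ℝ):ℂ)*Complex.I by push_cast; ring]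
    exact Complex.norm_exp_ofReal_mul_I _
  have hbnd : ∀ᵐ θ ∂(volume.restrict s),
      (1-M)^2 ≤ a₀ θ ∧ a₀ θ ≤ (1+M)^2/(1-M^2) ∧
      (1-M)^2 ≤ a₁ θ ∧ a₁ θ ≤ (1+M)^2/(1-M^2) ∧ 1 ≤ a₀ θ * a₁ θ := by
    filter_upwards [hμM] with θ hθ
    have hb := auxBounds M hM0 hM1 _ _ (hzabs θ) hθ
    rw [ha₀ θ, ha₁ θ]
    exact ⟨hb.1, hb.2.1, hb.2.2.1, hb.2.2.2.1, hb.2.2.2.2⟩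
  have hmeas₀ : Measurable a₀ := by
    rw [funext ha₀]
    exact ((continuous_norm.measurable.comp
      ((Complex.measurable_exp.comp (by fun_prop)).sub hμ_meas)).pow_const 2).div
      ((measurable_const.sub ((continuous_norm.measurable.comp hμ_meas).pow_const 2)))
  have hmeas₁ : Measurable a₁ := by
    rw [funext ha₁]
    exact ((continuous_norm.measurable.comp
      ((Complex.measurable_exp.comp (by fun_prop)).add hμ_meas)).pow_const 2).div
      ((measurable_const.sub ((continuous_norm.measurable.comp hμ_meas).pow_const 2)))
  have h1Msq : (0:ℝ) < (1-M)^2 := by nlinarith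
  have hint_a0 : Integrable a₀ (volume.restrict s) := by
    refine Integrable.mono' (integrable_const ((1+M)^2/(1-M^2)))
      hmeas₀.aestronglyMeasurable ?_
    filter_upwards [hbnd] with θ h
    rw [Real.norm_eq_abs, abs_of_nonneg (le_trans h1Msq.le h.1)]
    exact h.2.1
  have hp2int : Integrable (fun θ => (p θ)^2) (volume.restrict s) := hp_L2
  have hint_a1p2 : Integrable (fun θ => a₁ θ * p θ^2) (volume.restrict s) := by
    refine Integrable.mono' (hp2int.const_mul ((1+M)^2/(1-M^2)))
      ((hmeas₁.mul (hp_meas.pow_const 2)).aestronglyMeasurable) ?_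
    filter_upwards [hbnd] with θ h
    rw [Real.norm_eq_abs, abs_mul, abs_of_nonneg (le_trans h1Msq.le h.2.2.1), abs_of_nonneg (sq_nonneg _)]
    exact mul_le_mul_of_nonneg_right h.2.2.2.1 (sq_nonneg _)
  have hint_p : Integrable p (volume.restrict s) := by
    by_contra hcon
    rw [integral_undef hcon] at hp_int
    exact lt_irrefl 0 hp_int
  set I0 : ℝ := ∫ θ in s, a₀ θ with hI0
  set I1 : ℝ := ∫ θ in s, a₁ θ * p θ^2 with hI1
  set P : ℝ := ∫ θ in s, p θ with hPdef
  have hPpos : 0 < P := hp_int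
  have hI0pos : 0 < I0 := by
    have hlow : ∀ᵐ θ ∂(volume.restrict s), (1-M)^2 ≤ a₀ θ := hbnd.mono fun θ h => h.1
    have hmono := integral_mono_ae (integrable_const ((1-M)^2)) hint_a0 hlow
    rw [integral_const, measureReal_def, Measure.restrict_apply_univ, hsdef, Real.volume_Ioc] at hmono
    have h2π : (ENNReal.ofReal (2*π - 0)).toReal = 2*π := by
      rw [ENNReal.toReal_ofReal (by linarith)]; ring
    rw [h2π] at hmono
    simp only [smul_eq_mul] at hmono
    nlinarith [hmono]
  have hprod : I0 * I1 = P^2 := by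
    have h2π : (2*π) ≠ 0 := by positivity
    have hPne : P ≠ 0 := ne_of_gt hPpos
    field_simp at heq
    have h' : (2*π)^2 * (I0*I1) = (2*π)^2 * P^2 := by linear_combination (2*π)^2 * heq
    exact mul_left_cancel₀ (pow_ne_zero 2 h2π) h'
  set H : ℝ → ℝ := fun θ => I0^2 * (a₁ θ * p θ^2) - 2*I0*P*p θ + P^2 * a₀ θ with hHdef
  have hint_H : Integrable H (volume.restrict s) :=
    ((hint_a1p2.const_mul (I0^2)).sub (hint_p.const_mul (2*I0*P))).add (hint_a0.const_mul (P^2))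
  have hintH : ∫ θ in s, H θ = I0^2*I1 - 2*I0*P*P + P^2*I0 := by
    have e1 : ∫ θ in s, H θ =
        (∫ θ in s, (I0^2 * (a₁ θ * p θ^2) - 2*I0*P*p θ)) + ∫ θ in s, P^2*a₀ θ :=
      integral_add ((hint_a1p2.const_mul _).sub (hint_p.const_mul _)) (hint_a0.const_mul _)
    have e2 : ∫ θ in s, (I0^2 * (a₁ θ * p θ^2) - 2*I0*P*p θ) =
        (∫ θ in s, I0^2 * (a₁ θ * p θ^2)) - ∫ θ in s, 2*I0*P*p θ :=
      integral_sub (hint_a1p2.const_mul _) (hint_p.const_mul _)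
    rw [e1, e2, integral_const_mul, integral_const_mul, integral_const_mul]
  have hH0 : ∫ θ in s, H θ = 0 := by
    rw [hintH]; linear_combination I0 * hprod
  have hHnn : 0 ≤ᵐ[volume.restrict s] H := by
    filter_upwards [hbnd, hp_pos] with θ hb hp
    simp only [Pi.zero_apply]
    have hA : 0 < a₀ θ := lt_of_lt_of_le h1Msq hb.1
    have h1 : 0 ≤ I0^2 * p θ^2 * (a₀ θ * a₁ θ - 1) :=
      mul_nonneg (by positivity) (by linarith [hb.2.2.2.2])
    have h2 : 0 ≤ a₀ θ * H θ := by
      have hring : a₀ θ * H θ =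
          (I0 * p θ - P * a₀ θ)^2 + I0^2 * p θ^2 * (a₀ θ * a₁ θ - 1) := by
        rw [hHdef]; ring
      rw [hring]
      exact add_nonneg (sq_nonneg _) h1
    nlinarith [h2, hA]
  have hHzero : H =ᵐ[volume.restrict s] 0 :=
    (integral_eq_zero_iff_of_nonneg_ae hHnn hint_H).mp hH0
  have hmain : ∀ᵐ θ ∂(volume.restrict s),
      a₀ θ * a₁ θ = 1 ∧ p θ = (P / I0) * a₀ θ := by
    filter_upwards [hbnd, hp_pos, hHzero] with θ hb hp hz
    have hA : 0 < a₀ θ := lt_of_lt_of_le h1Msq hb.1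
    have hzero : a₀ θ * H θ = 0 := by rw [Pi.zero_apply] at hz; rw [hz]; ring
    have hring : a₀ θ * H θ =
        (I0 * p θ - P * a₀ θ)^2 + I0^2 * p θ^2 * (a₀ θ * a₁ θ - 1) := by
      rw [hHdef]; ring
    have h1 : 0 ≤ I0^2 * p θ^2 * (a₀ θ * a₁ θ - 1) :=
      mul_nonneg (by positivity) (by linarith [hb.2.2.2.2])
    rw [hring] at hzero
    have hsq0 : (I0 * p θ - P * a₀ θ)^2 = 0 := by
      linarith [sq_nonneg (I0 * p θ - P * a₀ θ), h1, hzero]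
    have heq1 : I0 * p θ = P * a₀ θ := by
      have := pow_eq_zero_iff two_ne_zero |>.mp hsq0
      linarith [this]
    constructor
    · have hterm : I0^2 * p θ^2 * (a₀ θ * a₁ θ - 1) = 0 := by
        linarith [hzero, hsq0]
      have hpos : 0 < I0^2 * p θ^2 := by positivity
      have := (mul_eq_zero.mp hterm).resolve_left (ne_of_gt hpos)
      linarith [this]
    · have hI0ne : I0 ≠ 0 := ne_of_gt hI0pos
      field_simp
      linarith [heq1]
  constructor
  · filter_upwards [hmain, hμM] with θ h hm
    have h1 : a₀ θ * a₁ θ = 1 := h.1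
    rw [ha₀ θ, ha₁ θ] at h1
    exact auxC M hM1 θ (μ θ) hm h1
  · exact ⟨P / I0, div_pos hPpos hI0pos, hmain.mono fun θ h => h.2⟩
end

section
/- Let μ : ℝ → ℂ be measurable and 2π-periodic with ess sup |μ| < 1, and suppose that for almost every θ the number e^{−2iθ}μ(θ) is real with e^{−2iθ}μ(θ) ∈ (−1,1). Define a₀(θ) = |e^{2iθ} − μ(θ)|²/(1 − |μ(θ)|²) and a₁(θ) = |e^{2iθ} + μ(θ)|²/(1 − |μ(θ)|²), and let p(θ) = c · a₀(θ) for some constant c > 0, assuming p ∈ L²[0,2π]. Then with g₀ = (1/2π)∫₀^{2π} a₀ dθ and g₁ = [(1/2π)∫₀^{2π} a₁ p² dθ] / [(1/2π)∫₀^{2π} p dθ]², one has g₀ · g₁ = 1. -/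
open MeasureTheory
open scoped Real

/-- conversely, if `e^{-2iθ} μ(θ)` is a.e. real and in `(-1,1)` and `p = c · a₀`
for a constant `c > 0` (with `p ∈ L²[0,2π]`), then `g₀ · g₁ = 1`. -/
theorem stmt_2 (μ : ℝ → ℂ) (p : ℝ → ℝ)
    (hμ_meas : Measurable μ)
    (hμ_per : ∀ θ : ℝ, μ (θ + 2 * π) = μ θ)
    (hμ_bd : ∃ M : ℝ, M < 1 ∧ ∀ᵐ θ : ℝ ∂volume, ‖μ θ‖ ≤ M)
    (hμ_real : ∀ᵐ θ : ℝ ∂volume,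
      (Complex.exp (-(2*θ)*Complex.I) * μ θ).im = 0 ∧
      (Complex.exp (-(2*θ)*Complex.I) * μ θ).re ∈ Set.Ioo (-1:ℝ) 1)
    (a₀ : ℝ → ℝ)
    (ha₀ : ∀ θ, a₀ θ =
      ‖Complex.exp (2*θ*Complex.I) - μ θ‖^2 / (1 - (‖μ θ‖)^2))
    (a₁ : ℝ → ℝ)
    (ha₁ : ∀ θ, a₁ θ =
      ‖Complex.exp (2*θ*Complex.I) + μ θ‖^2 / (1 - (‖μ θ‖)^2))
    (c : ℝ) (hc : 0 < c)
    (hp : ∀ θ, p θ = c * a₀ θ)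
    (hp_L2 : IntegrableOn (fun θ => (p θ)^2) (Set.Ioc (0:ℝ) (2*π))) :
    ((1/(2*π)) * ∫ θ in Set.Ioc (0:ℝ) (2*π), a₀ θ) *
      (((1/(2*π)) * ∫ θ in Set.Ioc (0:ℝ) (2*π), a₁ θ * (p θ)^2) /
        ((1/(2*π)) * ∫ θ in Set.Ioc (0:ℝ) (2*π), p θ)^2) = 1 := by
  obtain ⟨M, hM1, hMae⟩ := hμ_bd
  have hM0 : 0 ≤ M := by
    obtain ⟨θ, hθ⟩ := hMae.exists
    exact le_trans (norm_nonneg _) hθ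
  set S := Set.Ioc (0:ℝ) (2*π) with hS
  -- key pointwise facts
  have key : ∀ᵐ θ : ℝ ∂volume, a₀ θ * a₁ θ = 1 ∧ (1-M)/(1+M) ≤ a₀ θ ∧
      0 < a₀ θ ∧ a₀ θ ≤ (1+M)/(1-M) := by
    filter_upwards [hμ_real, hMae] with θ hθ habs
    obtain ⟨him, hre⟩ := hθ
    set x := (Complex.exp (-(2*θ)*Complex.I) * μ θ).re with hxdef
    have hx : Complex.exp (-(2*θ)*Complex.I) * μ θ = (x:ℂ) := by
      apply Complex.ext
      · simp [hxdef]
      · simpa using him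
    have hinv : Complex.exp (-(2*θ)*Complex.I) = (Complex.exp (2*θ*Complex.I))⁻¹ := by
      rw [← Complex.exp_neg]; ring_nf
    have hne : Complex.exp (2*θ*Complex.I) ≠ 0 := Complex.exp_ne_zero _
    have hμθ : μ θ = Complex.exp (2*θ*Complex.I) * (x:ℂ) := by
      rw [← hx, hinv]; field_simp
    have habs1 : ‖Complex.exp (2*θ*Complex.I)‖ = 1 := by
      rw [show (2*(θ:ℂ)) = ((2*θ:ℝ):ℂ) by push_cast; ring]
      exact Complex.norm_exp_ofReal_mul_I _
    have habsμ : ‖μ θ‖ = |x| := by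
      rw [hμθ, norm_mul, habs1, one_mul, Complex.norm_real, Real.norm_eq_abs]
    have habsm : ‖Complex.exp (2*θ*Complex.I) - μ θ‖ = |1 - x| := by
      rw [hμθ, show Complex.exp (2*θ*Complex.I) - Complex.exp (2*θ*Complex.I) * (x:ℂ)
        = Complex.exp (2*θ*Complex.I) * ((1:ℂ) - (x:ℂ)) by ring, norm_mul, habs1, one_mul,
        show ((1:ℂ) - (x:ℂ)) = ((1 - x : ℝ):ℂ) by push_cast; ring, Complex.norm_real, Real.norm_eq_abs]
    have habsp : ‖Complex.exp (2*θ*Complex.I) + μ θ‖ = |1 + x| := by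
      rw [hμθ, show Complex.exp (2*θ*Complex.I) + Complex.exp (2*θ*Complex.I) * (x:ℂ)
        = Complex.exp (2*θ*Complex.I) * ((1:ℂ) + (x:ℂ)) by ring, norm_mul, habs1, one_mul,
        show ((1:ℂ) + (x:ℂ)) = ((1 + x : ℝ):ℂ) by push_cast; ring, Complex.norm_real, Real.norm_eq_abs]
    have hx1 : -1 < x := hre.1
    have hx2 : x < 1 := hre.2
    have hxM : |x| ≤ M := by rwa [habsμ] at habs
    have hxM1 : x ≤ M := le_trans (le_abs_self x) hxM
    have hxM2 : -M ≤ x := neg_le_of_abs_le hxM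
    have h1 : (0:ℝ) < 1 - x := by linarith
    have h2 : (0:ℝ) < 1 + x := by linarith
    have ha₀' : a₀ θ = (1 - x)/(1 + x) := by
      rw [ha₀, habsm, habsμ, sq_abs, sq_abs]
      rw [show (1:ℝ) - x^2 = (1-x)*(1+x) by ring]
      field_simp
    have ha₁' : a₁ θ = (1 + x)/(1 - x) := by
      rw [ha₁, habsp, habsμ, sq_abs, sq_abs]
      rw [show (1:ℝ) - x^2 = (1-x)*(1+x) by ring]
      field_simp
    have hM1' : (0:ℝ) < 1 - M := by linarith
    have hM2' : (0:ℝ) < 1 + M := by linarith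
    refine ⟨?_, ?_, ?_, ?_⟩
    · rw [ha₀', ha₁']; field_simp
    · rw [ha₀', div_le_div_iff₀ hM2' h2]; nlinarith
    · rw [ha₀']; positivity
    · rw [ha₀', div_le_div_iff₀ h2 hM1']; nlinarith
  have keyS : ∀ᵐ θ : ℝ ∂(volume.restrict S), a₀ θ * a₁ θ = 1 ∧ (1-M)/(1+M) ≤ a₀ θ ∧
      0 < a₀ θ ∧ a₀ θ ≤ (1+M)/(1-M) := ae_restrict_of_ae key
  -- measurability of a₀
  have ha₀m : Measurable a₀ := by
    have : a₀ = fun θ : ℝ => ‖Complex.exp (2*θ*Complex.I) - μ θ‖^2 /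
        (1 - (‖μ θ‖)^2) := funext ha₀
    rw [this]
    apply Measurable.div
    · apply Measurable.pow _ measurable_const
      apply continuous_norm.measurable.comp
      exact (Complex.measurable_exp.comp (by fun_prop)).sub hμ_meas
    · apply Measurable.sub measurable_const
      exact (continuous_norm.measurable.comp hμ_meas).pow measurable_const
  -- integrability of a₀ on S
  have hInt : IntegrableOn a₀ S := by
    apply Integrable.mono' (g := fun _ => (1+M)/(1-M)) (integrable_const _)
      ha₀m.aestronglyMeasurable.restrict
    filter_upwards [keyS] with θ hθ
    rw [Real.norm_eq_abs, abs_of_pos hθ.2.2.1]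
    exact hθ.2.2.2
  have hπ : (0:ℝ) < π := Real.pi_pos
  -- lower bound on ∫ a₀
  have hIlow : (2*π) * ((1-M)/(1+M)) ≤ ∫ θ in S, a₀ θ := by
    have hconst : ∫ _ in S, ((1-M)/(1+M)) = (2*π) * ((1-M)/(1+M)) := by
      rw [setIntegral_const, hS, Real.volume_real_Ioc_of_le (by linarith), smul_eq_mul]
      ring
    rw [← hconst]
    exact integral_mono_ae (integrable_const _) hInt
      (by filter_upwards [keyS] with θ hθ; exact hθ.2.1)
  have hIpos : 0 < ∫ θ in S, a₀ θ := by
    refine lt_of_lt_of_le ?_ hIlow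
    have : (0:ℝ) < (1-M)/(1+M) := by
      apply div_pos <;> linarith
    positivity
  set I := ∫ θ in S, a₀ θ with hI
  have E2 : ∫ θ in S, p θ = c * I := by
    rw [hI, ← integral_const_mul]
    exact integral_congr_ae (Filter.Eventually.of_forall fun θ => hp θ)
  have E1 : ∫ θ in S, a₁ θ * (p θ)^2 = c^2 * I := by
    rw [hI, ← integral_const_mul]
    apply integral_congr_ae
    filter_upwards [keyS] with θ hθ
    rw [hp θ]
    linear_combination (c^2 * a₀ θ) * hθ.1
  rw [E1, E2]
  have hIne : I ≠ 0 := ne_of_gt hIpos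
  have hcne : c ≠ 0 := ne_of_gt hc
  have hπne : π ≠ 0 := ne_of_gt hπ
  field_simp
end

section
/- Let f : 𝔻 → Ω be a C¹ diffeomorphism between open subsets of ℂ ≅ ℝ² with positive Jacobian determinant J(f) = |∂f|² − |∂̄f|² > 0, where ∂f = (f_x − i f_y)/2 and ∂̄f = (f_x + i f_y)/2 are the Wirtinger derivatives, and let μ = ∂̄f/∂f be the complex dilatation. Let h : 𝔻 → ℝ be C¹. Then, as an identity of integrals in [0,∞], ∫_Ω |∇(h ∘ f⁻¹)|² dA = ∫_𝔻 { a₀ h_r² + a₁ (h_θ²/r²) + a₂ h_r (h_θ/r) } r dr dθ, where in polar coordinates (r,θ) on 𝔻 the coefficients are a₀ = |e^{2iθ} − μ|²/(1 − |μ|²), a₁ = |e^{2iθ} + μ|²/(1 − |μ|²), and a₂ = 2 Im( conj(e^{2iθ} + μ)(e^{2iθ} − μ) )/(1 − |μ|²), evaluated at the point re^{iθ}, and h_r, h_θ denote the polar partial derivatives of h. -/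
set_option maxHeartbeats 2000000


open MeasureTheory

/-- The Wirtinger derivative `∂f = (f_x - i f_y)/2` of `f : ℂ → ℂ` viewed as a real map. -/
noncomputable def wirtingerD (f : ℂ → ℂ) (z : ℂ) : ℂ :=
  (fderiv ℝ f z 1 - Complex.I * fderiv ℝ f z Complex.I) / 2

/-- The Wirtinger derivative `∂̄f = (f_x + i f_y)/2` of `f : ℂ → ℂ` viewed as a real map. -/
noncomputable def wirtingerDBar (f : ℂ → ℂ) (z : ℂ) : ℂ :=
  (fderiv ℝ f z 1 + Complex.I * fderiv ℝ f z Complex.I) / 2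

lemma clm_apply' (M : ℂ →L[ℝ] ℝ) (w : ℂ) : M w = w.re * M 1 + w.im * M Complex.I := by
  have h : w = w.re • (1:ℂ) + w.im • Complex.I := by
    simp [Complex.real_smul, Complex.re_add_im]
  conv_lhs => rw [h]
  rw [map_add, M.map_smul, M.map_smul, smul_eq_mul, smul_eq_mul]

lemma clm_applyC (M : ℂ →L[ℝ] ℂ) (w : ℂ) : M w = w.re • M 1 + w.im • M Complex.I := by
  have h : w = w.re • (1:ℂ) + w.im • Complex.I := by
    simp [Complex.real_smul, Complex.re_add_im]
  conv_lhs => rw [h]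
  rw [map_add, M.map_smul, M.map_smul]

lemma cauchy2 (a b c d : ℝ) : |a*c+b*d| ≤ Real.sqrt (a^2+b^2) * Real.sqrt (c^2+d^2) := by
  rw [← Real.sqrt_sq_eq_abs, ← Real.sqrt_mul (by positivity)]
  apply Real.sqrt_le_sqrt
  nlinarith [sq_nonneg (a*d - b*c)]

lemma opNorm_sq (M : ℂ →L[ℝ] ℝ) : ‖M‖^2 = (M 1)^2 + (M Complex.I)^2 := by
  set S : ℝ := (M 1)^2 + (M Complex.I)^2 with hS
  have hS0 : 0 ≤ S := by positivity
  have habs : ∀ w : ℂ, ‖w‖ = Real.sqrt (w.re^2 + w.im^2) := by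
    intro w; rw [Complex.norm_def, Complex.normSq_apply]; ring_nf
  have hle : ‖M‖ ≤ Real.sqrt S := by
    apply ContinuousLinearMap.opNorm_le_bound _ (Real.sqrt_nonneg _)
    intro w
    rw [clm_apply' M w, habs w, Real.norm_eq_abs]
    calc |w.re * M 1 + w.im * M Complex.I|
        ≤ Real.sqrt (w.re^2 + w.im^2) * Real.sqrt ((M 1)^2 + (M Complex.I)^2) := by
          have := cauchy2 w.re (w.im) (M 1) (M Complex.I); linarith [this]
      _ = Real.sqrt S * Real.sqrt (w.re^2 + w.im^2) := by rw [mul_comm]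
  rcases eq_or_lt_of_le hS0 with h0 | hpos
  · have h1 : M 1 = 0 ∧ M Complex.I = 0 := by
      constructor <;> nlinarith [sq_nonneg (M 1), sq_nonneg (M Complex.I)]
    have : M = 0 := by
      ext1 w
      rw [clm_apply' M w, h1.1, h1.2]; simp
    rw [this, ← h0]; simp
  · set w₀ : ℂ := ⟨M 1, M Complex.I⟩ with hw₀
    have hMw₀ : M w₀ = S := by rw [clm_apply' M w₀]; simp [hw₀, hS]; ring
    have hn : ‖w₀‖ = Real.sqrt S := by
      rw [habs]
    have hge : S ≤ ‖M‖ * Real.sqrt S := by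
      calc S = M w₀ := hMw₀.symm
        _ ≤ |M w₀| := le_abs_self _
        _ = ‖M w₀‖ := rfl
        _ ≤ ‖M‖ * ‖w₀‖ := M.le_opNorm w₀
        _ = ‖M‖ * Real.sqrt S := by rw [hn]
    have hsq : Real.sqrt S ≤ ‖M‖ := by
      have h2 : Real.sqrt S * Real.sqrt S = S := Real.mul_self_sqrt hS0
      have hs : 0 < Real.sqrt S := Real.sqrt_pos.mpr hpos
      nlinarith
    have : ‖M‖ = Real.sqrt S := le_antisymm hle hsq
    rw [this, Real.sq_sqrt hS0]

lemma det_clm (A : ℂ →L[ℝ] ℂ) :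
    (A : ℂ →L[ℝ] ℂ).det = (A 1).re * (A Complex.I).im - (A 1).im * (A Complex.I).re := by
  have : (A : ℂ →L[ℝ] ℂ).det = LinearMap.det (A : ℂ →ₗ[ℝ] ℂ) := rfl
  rw [this, ← LinearMap.det_toMatrix Complex.basisOneI, Matrix.det_fin_two]
  simp [LinearMap.toMatrix_apply, Complex.coe_basisOneI, Complex.coe_basisOneI_repr]
  ring

lemma wirt_det (a b : ℂ) :
    (‖(a - Complex.I*b)/2‖)^2 - (‖(a + Complex.I*b)/2‖)^2
      = a.re*b.im - a.im*b.re := by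
  rw [Complex.sq_norm, Complex.sq_norm]
  simp [Complex.normSq_apply, Complex.div_re, Complex.div_im,
    Complex.sub_re, Complex.sub_im, Complex.add_re, Complex.add_im, Complex.mul_re,
    Complex.mul_im, Complex.I_re, Complex.I_im, Complex.normSq_ofNat, Complex.re_ofNat,
    Complex.im_ofNat]
  ring
lemma key_alg (a b z μ E : ℂ) (p q hr hθr : ℝ) (hz : z ≠ 0)
    (hμ : μ = ((a + Complex.I*b)/2) / ((a - Complex.I*b)/2))
    (hE : E = z^2 / ((‖z‖ : ℂ))^2)
    (hhr : hr = (z.re*p + z.im*q)/‖z‖)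
    (hht : hθr = (-(z.im)*p + z.re*q)/‖z‖)
    (hJ : 0 < a.re*b.im - a.im*b.re) :
    (‖E - μ‖)^2/(1 - (‖μ‖)^2) * hr^2
    + (‖E + μ‖)^2/(1 - (‖μ‖)^2) * hθr^2
    + 2*((starRingEnd ℂ) (E + μ) * (E - μ)).im/(1 - (‖μ‖)^2) * hr * hθr
    = ((b.im*p - a.im*q)^2 + (b.re*p - a.re*q)^2) / (a.re*b.im - a.im*b.re) := by
  set d : ℂ := (a - Complex.I*b)/2 with hd
  set db : ℂ := (a + Complex.I*b)/2 with hdb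
  have hdd : Complex.normSq d - Complex.normSq db = a.re*b.im - a.im*b.re := by
    simp [hd, hdb, Complex.normSq_apply, Complex.div_re, Complex.div_im, Complex.add_re,
      Complex.add_im, Complex.sub_re, Complex.sub_im, Complex.mul_re, Complex.mul_im,
      Complex.I_re, Complex.I_im, Complex.normSq_ofNat]
    ring
  have hndpos : 0 < Complex.normSq d := by
    have := Complex.normSq_nonneg db
    nlinarith
  have hd0 : d ≠ 0 := by
    intro h0; rw [h0] at hndpos; simp at hndpos
  have hnz : Complex.normSq z ≠ 0 := (Complex.normSq_pos.mpr hz).ne'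
  have habs2 : ((‖z‖ : ℂ))^2 = (Complex.normSq z : ℂ) := by
    rw [← Complex.ofReal_pow, Complex.sq_norm]
  have habsr : (‖z‖)^2 = Complex.normSq z := Complex.sq_norm z
  have hnzc : (Complex.normSq z : ℂ) ≠ 0 := by exact_mod_cast hnz
  have hnd : Complex.normSq d ≠ 0 := hndpos.ne'
  -- rewrite μ, E as single fractions
  have hEμsub : E - μ = (z^2*d - (Complex.normSq z : ℂ)*db)/((Complex.normSq z : ℂ)*d) := by
    rw [hE, habs2]
    rw [hμ]
    field_simp
    try ring
  have hEμadd : E + μ = (z^2*d + (Complex.normSq z : ℂ)*db)/((Complex.normSq z : ℂ)*d) := by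
    rw [hE, habs2]
    rw [hμ]
    field_simp
    try ring
  have hμ2 : 1 - (‖μ‖)^2 = (Complex.normSq d - Complex.normSq db)/Complex.normSq d := by
    rw [hμ, Complex.sq_norm, Complex.normSq_div]
    field_simp
  set J : ℝ := a.re*b.im - a.im*b.re with hJdef
  set Nm : ℂ := z^2*d - (Complex.normSq z : ℂ)*db with hNm
  set Np : ℂ := z^2*d + (Complex.normSq z : ℂ)*db with hNp
  have hconj : ((starRingEnd ℂ) (E + μ) * (E - μ)).im
      = ((starRingEnd ℂ) Np * Nm).im / (Complex.normSq z ^2 * Complex.normSq d) := by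
    rw [hEμsub, hEμadd, map_div₀, div_mul_div_comm, ← Complex.normSq_eq_conj_mul_self,
      Complex.normSq_mul, Complex.normSq_ofReal]
    rw [Complex.div_ofReal_im]
    ring_nf
  have habsm : (‖E - μ‖)^2 = Complex.normSq Nm / (Complex.normSq z ^2 * Complex.normSq d) := by
    rw [hEμsub, Complex.sq_norm, Complex.normSq_div, Complex.normSq_mul, Complex.normSq_ofReal]
    ring_nf
  have habsp : (‖E + μ‖)^2 = Complex.normSq Np / (Complex.normSq z ^2 * Complex.normSq d) := by
    rw [hEμadd, Complex.sq_norm, Complex.normSq_div, Complex.normSq_mul, Complex.normSq_ofReal]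
    ring_nf
  have e1 : hr^2 = (z.re*p+z.im*q)^2/Complex.normSq z := by
    rw [hhr, div_pow, habsr]
  have e2 : hθr^2 = (-(z.im)*p+z.re*q)^2/Complex.normSq z := by
    rw [hht, div_pow, habsr]
  have e3 : ∀ X : ℝ, X*hr*hθr = X*((z.re*p+z.im*q)*(-(z.im)*p+z.re*q)/Complex.normSq z) := by
    intro X
    rw [mul_assoc, hhr, hht, div_mul_div_comm, Complex.norm_mul_self_eq_normSq]
  have compset : ∀ w v : ℂ, (w*v).re = w.re*v.re - w.im*v.im := fun w v => Complex.mul_re w v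
  have cnz : Complex.normSq z = z.re*z.re + z.im*z.im := Complex.normSq_apply z
  have cnd : Complex.normSq d = (a.re+b.im)/2*((a.re+b.im)/2) + (a.im-b.re)/2*((a.im-b.re)/2) := by
    rw [hd]
    simp [Complex.normSq_apply, Complex.div_re, Complex.div_im, Complex.sub_re, Complex.sub_im,
      Complex.mul_re, Complex.mul_im, Complex.I_re, Complex.I_im, Complex.normSq_ofNat,
      Complex.re_ofNat, Complex.im_ofNat]
    ring
  have cNm : Complex.normSq Nm =
      ((z.re*z.re - z.im*z.im)*((a.re+b.im)/2) - 2*z.re*z.im*((a.im-b.re)/2)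
        - (z.re*z.re+z.im*z.im)*((a.re-b.im)/2))
      * ((z.re*z.re - z.im*z.im)*((a.re+b.im)/2) - 2*z.re*z.im*((a.im-b.re)/2)
        - (z.re*z.re+z.im*z.im)*((a.re-b.im)/2))
      + ((z.re*z.re - z.im*z.im)*((a.im-b.re)/2) + 2*z.re*z.im*((a.re+b.im)/2)
        - (z.re*z.re+z.im*z.im)*((a.im+b.re)/2))
      * ((z.re*z.re - z.im*z.im)*((a.im-b.re)/2) + 2*z.re*z.im*((a.re+b.im)/2)
        - (z.re*z.re+z.im*z.im)*((a.im+b.re)/2)) := by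
    rw [hNm, hd, hdb]
    simp [Complex.normSq_apply, Complex.div_re, Complex.div_im, Complex.sub_re, Complex.sub_im,
      Complex.add_re, Complex.add_im, Complex.mul_re, Complex.mul_im, Complex.I_re, Complex.I_im,
      Complex.normSq_ofNat, Complex.re_ofNat, Complex.im_ofNat, Complex.ofReal_re,
      Complex.ofReal_im, pow_two]
    ring
  have cNp : Complex.normSq Np =
      ((z.re*z.re - z.im*z.im)*((a.re+b.im)/2) - 2*z.re*z.im*((a.im-b.re)/2)
        + (z.re*z.re+z.im*z.im)*((a.re-b.im)/2))
      * ((z.re*z.re - z.im*z.im)*((a.re+b.im)/2) - 2*z.re*z.im*((a.im-b.re)/2)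
        + (z.re*z.re+z.im*z.im)*((a.re-b.im)/2))
      + ((z.re*z.re - z.im*z.im)*((a.im-b.re)/2) + 2*z.re*z.im*((a.re+b.im)/2)
        + (z.re*z.re+z.im*z.im)*((a.im+b.re)/2))
      * ((z.re*z.re - z.im*z.im)*((a.im-b.re)/2) + 2*z.re*z.im*((a.re+b.im)/2)
        + (z.re*z.re+z.im*z.im)*((a.im+b.re)/2)) := by
    rw [hNp, hd, hdb]
    simp [Complex.normSq_apply, Complex.div_re, Complex.div_im, Complex.sub_re, Complex.sub_im,
      Complex.add_re, Complex.add_im, Complex.mul_re, Complex.mul_im, Complex.I_re, Complex.I_im,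
      Complex.normSq_ofNat, Complex.re_ofNat, Complex.im_ofNat, Complex.ofReal_re,
      Complex.ofReal_im, pow_two]
    ring
  have cIm : ((starRingEnd ℂ) Np * Nm).im =
      ((z.re*z.re - z.im*z.im)*((a.re+b.im)/2) - 2*z.re*z.im*((a.im-b.re)/2)
        + (z.re*z.re+z.im*z.im)*((a.re-b.im)/2))
      * ((z.re*z.re - z.im*z.im)*((a.im-b.re)/2) + 2*z.re*z.im*((a.re+b.im)/2)
        - (z.re*z.re+z.im*z.im)*((a.im+b.re)/2))
      - ((z.re*z.re - z.im*z.im)*((a.im-b.re)/2) + 2*z.re*z.im*((a.re+b.im)/2)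
        + (z.re*z.re+z.im*z.im)*((a.im+b.re)/2))
      * ((z.re*z.re - z.im*z.im)*((a.re+b.im)/2) - 2*z.re*z.im*((a.im-b.re)/2)
        - (z.re*z.re+z.im*z.im)*((a.re-b.im)/2)) := by
    rw [hNm, hNp, hd, hdb]
    simp [Complex.normSq_apply, Complex.div_re, Complex.div_im, Complex.sub_re, Complex.sub_im,
      Complex.add_re, Complex.add_im, Complex.mul_re, Complex.mul_im, Complex.I_re, Complex.I_im,
      Complex.normSq_ofNat, Complex.re_ofNat, Complex.im_ofNat, Complex.ofReal_re,
      Complex.ofReal_im, Complex.conj_re, Complex.conj_im, pow_two, map_sub, map_add]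
    ring
  have hJ' : J ≠ 0 := hJ.ne'
  have hJdd : J = a.re*b.im - a.im*b.re := hJdef
  have h4nd : (a.re + b.im) * (a.re + b.im) + (a.im - b.re) * (a.im - b.re) ≠ 0 := by
    intro hc
    apply hnd
    rw [cnd]
    linarith
  have hnz' : z.re*z.re + z.im*z.im ≠ 0 := by rw [← cnz]; exact hnz
  have hJclean : a.re*b.im - a.im*b.re ≠ 0 := by rw [← hJdd]; exact hJ'
  rw [habsm, habsp, hconj, hμ2, hdd, e1, e2, e3, cnz, cnd, cNm, cNp, cIm, hJdd]
  field_simp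
  rw [div_eq_iff (mul_ne_zero (pow_ne_zero _ (by rw [sq, sq]; exact hnz')) (by rw [sq, sq]; exact h4nd))]
  ring

/-- transformation of the Dirichlet integral of `h ∘ f⁻¹` under a C¹
diffeomorphism `f : 𝔻 → Ω` with positive Jacobian `J(f) = |∂f|² - |∂̄f|²`, expressed in polar
form on `𝔻` (the factor `r dr dθ` is two-dimensional Lebesgue measure), as an identity in
`[0,∞]`.  Here `g = f⁻¹`, `μ = ∂̄f/∂f` is the complex dilatation, `e^{2iθ} = z²/|z|²`,
`h_r = ∂h/∂r` and `h_θ/r` are the polar derivatives of `h` at `z`. -/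
theorem stmt_3 (𝔻 Ω : Set ℂ) (h𝔻 : IsOpen 𝔻) (hΩ : IsOpen Ω)
    (f g : ℂ → ℂ)
    (hf : ContDiffOn ℝ 1 f 𝔻) (hg : ContDiffOn ℝ 1 g Ω)
    (hf_maps : Set.MapsTo f 𝔻 Ω) (hg_maps : Set.MapsTo g Ω 𝔻)
    (hgf : ∀ z ∈ 𝔻, g (f z) = z) (hfg : ∀ w ∈ Ω, f (g w) = w)
    (hJ : ∀ z ∈ 𝔻,
      0 < (‖wirtingerD f z‖)^2 - (‖wirtingerDBar f z‖)^2)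
    (h : ℂ → ℝ) (hh : ContDiffOn ℝ 1 h 𝔻) :
    ∫⁻ w in Ω, ENNReal.ofReal (‖fderiv ℝ (fun w => h (g w)) w‖^2) =
      ∫⁻ z in 𝔻, ENNReal.ofReal (
        let μ : ℂ := wirtingerDBar f z / wirtingerD f z
        let E : ℂ := z^2 / (‖z‖ : ℂ)^2
        let a₀ : ℝ := (‖E - μ‖)^2 / (1 - (‖μ‖)^2)
        let a₁ : ℝ := (‖E + μ‖)^2 / (1 - (‖μ‖)^2)
        let a₂ : ℝ := 2 * ((starRingEnd ℂ) (E + μ) * (E - μ)).im / (1 - (‖μ‖)^2)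
        let hr : ℝ := fderiv ℝ h z (z / (‖z‖ : ℂ))
        let hθr : ℝ := fderiv ℝ h z (Complex.I * z / (‖z‖ : ℂ))
        a₀ * hr^2 + a₁ * hθr^2 + a₂ * hr * hθr) := by
  have hΩeq : Ω = f '' 𝔻 := by
    apply Set.Subset.antisymm
    · intro w hw
      exact ⟨g w, hg_maps hw, hfg w hw⟩
    · exact Set.image_subset_iff.mpr hf_maps
  have hInj : Set.InjOn f 𝔻 := fun x hx y hy hxy => by
    rw [← hgf x hx, ← hgf y hy, hxy]
  have hder : ∀ z ∈ 𝔻, HasFDerivWithinAt f (fderiv ℝ f z) 𝔻 z := by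
    intro z hz
    exact (((hf.contDiffAt (h𝔻.mem_nhds hz)).differentiableAt
      one_ne_zero).hasFDerivAt).hasFDerivWithinAt
  rw [hΩeq, lintegral_image_eq_lintegral_abs_det_fderiv_mul volume h𝔻.measurableSet hder hInj]
  apply lintegral_congr_ae
  have h0ae : ∀ᵐ z ∂(volume.restrict 𝔻), z ≠ (0:ℂ) := by
    rw [MeasureTheory.ae_iff]
    have : {z : ℂ | ¬ z ≠ 0} = {(0:ℂ)} := by ext w; simp
    rw [this]
    exact le_antisymm ((Measure.restrict_apply_le _ _).trans (by simp)) (by simp)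
  filter_upwards [ae_restrict_mem h𝔻.measurableSet, h0ae] with z hz hz0
  -- notation
  set A : ℂ →L[ℝ] ℂ := fderiv ℝ f z with hA
  set L : ℂ →L[ℝ] ℝ := fderiv ℝ h z with hL
  set a : ℂ := A 1 with ha
  set b : ℂ := A Complex.I with hb
  set p : ℝ := L 1 with hp
  set q : ℝ := L Complex.I with hq
  set J : ℝ := a.re*b.im - a.im*b.re with hJdef
  have hJpos : 0 < J := by
    have := hJ z hz
    rw [show wirtingerD f z = (a - Complex.I*b)/2 from rfl,
      show wirtingerDBar f z = (a + Complex.I*b)/2 from rfl, wirt_det] at this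
    exact this
  have hJ0 : J ≠ 0 := hJpos.ne'
  have hdet : A.det = J := by rw [det_clm, ← ha, ← hb]
  -- differentiability facts
  have hfz : f z ∈ Ω := hf_maps hz
  have hgdiff : DifferentiableAt ℝ g (f z) :=
    (hg.contDiffAt (hΩ.mem_nhds hfz)).differentiableAt one_ne_zero
  have hhdiff : DifferentiableAt ℝ h z :=
    (hh.contDiffAt (h𝔻.mem_nhds hz)).differentiableAt one_ne_zero
  have hfdiff : DifferentiableAt ℝ f z :=
    (hf.contDiffAt (h𝔻.mem_nhds hz)).differentiableAt one_ne_zero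
  set B : ℂ →L[ℝ] ℂ := fderiv ℝ g (f z) with hB
  -- chain rule for h ∘ g at f z
  have hM : fderiv ℝ (fun w => h (g w)) (f z) = L.comp B := by
    have h1 : fderiv ℝ (h ∘ g) (f z) = (fderiv ℝ h (g (f z))).comp (fderiv ℝ g (f z)) := by
      apply fderiv_comp
      · rw [hgf z hz]; exact hhdiff
      · exact hgdiff
    rw [show (fun w => h (g w)) = h ∘ g from rfl, h1, hgf z hz]
  -- B ∘ A = id
  have hBA : B.comp A = ContinuousLinearMap.id ℝ ℂ := by
    have hev : (fun w => g (f w)) =ᶠ[nhds z] (id : ℂ → ℂ) := by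
      filter_upwards [h𝔻.mem_nhds hz] with w hw
      exact hgf w hw
    have h1 : fderiv ℝ (g ∘ f) z = B.comp A := by
      rw [hB, hA]
      exact fderiv_comp z hgdiff hfdiff
    rw [← h1, show (g ∘ f : ℂ → ℂ) = (fun w => g (f w)) from rfl, hev.fderiv_eq]
    exact fderiv_id
  have hBAa : ∀ w : ℂ, B (A w) = w := by
    intro w
    have := congrArg (fun T : ℂ →L[ℝ] ℂ => T w) hBA
    simpa using this
  -- explicit inverse values
  set c₁ : ℂ := ⟨b.im/J, -a.im/J⟩ with hc₁
  set c₂ : ℂ := ⟨-b.re/J, a.re/J⟩ with hc₂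
  have hAc₁ : A c₁ = 1 := by
    rw [clm_applyC A c₁, ← ha, ← hb]
    apply Complex.ext
    · simp [hc₁, Complex.add_re, Complex.smul_re]
      field_simp
      ring
    · simp [hc₁, Complex.add_im, Complex.smul_im]
      field_simp
      ring
  have hAc₂ : A c₂ = Complex.I := by
    rw [clm_applyC A c₂, ← ha, ← hb]
    apply Complex.ext
    · simp [hc₂, Complex.add_re, Complex.smul_re, Complex.I_re]
      field_simp
      ring
    · simp [hc₂, Complex.add_im, Complex.smul_im, Complex.I_im]
      field_simp
      ring
  have hB1 : B 1 = c₁ := by rw [← hAc₁, hBAa]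
  have hBI : B Complex.I = c₂ := by rw [← hAc₂, hBAa]
  have hM1 : (L.comp B) 1 = (b.im*p - a.im*q)/J := by
    rw [ContinuousLinearMap.comp_apply, hB1, clm_apply' L c₁, ← hp, ← hq]
    rw [hc₁]
    field_simp
    ring
  have hMI : (L.comp B) Complex.I = (-b.re*p + a.re*q)/J := by
    rw [ContinuousLinearMap.comp_apply, hBI, clm_apply' L c₂, ← hp, ← hq]
    rw [hc₂]
    field_simp
  -- polar derivative values
  have hhreq : fderiv ℝ h z (z / (‖z‖ : ℂ)) = (z.re*p + z.im*q)/‖z‖ := by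
    rw [← hL, clm_apply' L _, ← hp, ← hq]
    simp [Complex.div_ofReal_re, Complex.div_ofReal_im]
    ring
  have hhteq : fderiv ℝ h z (Complex.I * z / (‖z‖ : ℂ))
      = (-(z.im)*p + z.re*q)/‖z‖ := by
    rw [← hL, clm_apply' L _, ← hp, ← hq]
    simp [Complex.div_ofReal_re, Complex.div_ofReal_im, Complex.mul_re, Complex.mul_im,
      Complex.I_re, Complex.I_im]
    ring
  -- the key algebra
  have hkey := key_alg a b z (wirtingerDBar f z / wirtingerD f z)
    (z^2 / (‖z‖ : ℂ)^2) p q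
    (fderiv ℝ h z (z / (‖z‖ : ℂ)))
    (fderiv ℝ h z (Complex.I * z / (‖z‖ : ℂ)))
    hz0 rfl rfl hhreq hhteq hJpos
  -- final real identity
  have hreal : |A.det| * ‖fderiv ℝ (fun w => h (g w)) (f z)‖^2
      = (‖(z^2 / (‖z‖ : ℂ)^2) - wirtingerDBar f z / wirtingerD f z‖)^2
          / (1 - (‖wirtingerDBar f z / wirtingerD f z‖)^2)
          * (fderiv ℝ h z (z / (‖z‖ : ℂ)))^2
        + (‖(z^2 / (‖z‖ : ℂ)^2) + wirtingerDBar f z / wirtingerD f z‖)^2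
          / (1 - (‖wirtingerDBar f z / wirtingerD f z‖)^2)
          * (fderiv ℝ h z (Complex.I * z / (‖z‖ : ℂ)))^2
        + 2 * ((starRingEnd ℂ) ((z^2 / (‖z‖ : ℂ)^2) + wirtingerDBar f z / wirtingerD f z)
            * ((z^2 / (‖z‖ : ℂ)^2) - wirtingerDBar f z / wirtingerD f z)).im
          / (1 - (‖wirtingerDBar f z / wirtingerD f z‖)^2)
          * (fderiv ℝ h z (z / (‖z‖ : ℂ)))
          * (fderiv ℝ h z (Complex.I * z / (‖z‖ : ℂ))) := by
    rw [hkey, hM, opNorm_sq, hM1, hMI, hdet, abs_of_pos hJpos, ← hJdef]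
    field_simp
    ring
  calc ENNReal.ofReal |A.det| * ENNReal.ofReal (‖fderiv ℝ (fun w => h (g w)) (f z)‖^2)
      = ENNReal.ofReal (|A.det| * ‖fderiv ℝ (fun w => h (g w)) (f z)‖^2) :=
        (ENNReal.ofReal_mul (abs_nonneg _)).symm
    _ = _ := congrArg ENNReal.ofReal hreal
end

section
/- Let f : U → ℂ (U ⊂ ℂ open) be differentiable at the point z = re^{iθ} with r > 0, viewed as a map ℝ² → ℝ², and suppose its Jacobian determinant J(f)(z) = det Df(z) is nonzero. Let h : U → ℝ be differentiable at z. Then |(∇h)(z) · (Df(z))⁻¹|² = | −f_r(z) (h_θ(z)/r) + (f_θ(z)/r) h_r(z) |² / J(f)(z)², where f_r = cos θ f_x + sin θ f_y and f_θ = r(−sin θ f_x + cos θ f_y) are the polar partial derivatives of the complex-valued function f (and similarly h_r, h_θ for h), ∇h = (h_x, h_y) is a row vector, and | · | on the right denotes the complex modulus. -/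
open Complex

lemma aux_apply {E : Type*} [NormedAddCommGroup E] [NormedSpace ℝ E]
    (L : ℂ →L[ℝ] E) (w : ℂ) : L w = w.re • L 1 + w.im • L I := by
  conv_lhs => rw [show w = w.re • (1:ℂ) + w.im • I by simp [Complex.ext_iff],
    map_add, map_smul, map_smul]

lemma aux_norm (L : ℂ →L[ℝ] ℝ) : ‖L‖^2 = (L 1)^2 + (L I)^2 := by
  have hL : L = innerSL ℝ (⟨L 1, L I⟩ : ℂ) := by
    ext w
    rw [aux_apply L w, innerSL_apply_apply, Complex.inner]
    simp [smul_eq_mul]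
  have h1 : ‖L‖ = ‖(⟨L 1, L I⟩ : ℂ)‖ := by
    conv_lhs => rw [hL]
    rw [innerSL_apply_norm (𝕜 := ℝ)]
  rw [h1, Complex.sq_norm]
  simp [Complex.normSq_apply]
  ring

lemma aux_det (T : ℂ →ₗ[ℝ] ℂ) :
    LinearMap.det T = (T 1).re * (T I).im - (T 1).im * (T I).re := by
  rw [← LinearMap.det_toMatrix Complex.basisOneI, Matrix.det_fin_two]
  simp [LinearMap.toMatrix_apply]
  ring

/-- pointwise chain-rule identity.  If `f : ℂ → ℂ` (as a real map) has invertible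
derivative `Df` at `z = re^{iθ} ≠ 0` with Jacobian determinant `J ≠ 0`, and `h : ℂ → ℝ` has
derivative `Dh` at `z`, then the squared Euclidean length of the row vector `(∇h)(Df)⁻¹`
equals `|−f_r (h_θ/r) + (f_θ/r) h_r|² / J²`, where `f_r = Df(z/|z|)`, `f_θ/r = Df(iz/|z|)`,
`h_r = Dh(z/|z|)`, `h_θ/r = Dh(iz/|z|)` are the polar partial derivatives. -/
theorem stmt_4 (f : ℂ → ℂ) (h : ℂ → ℝ) (z : ℂ) (hz : z ≠ 0)
    (Df : ℂ ≃L[ℝ] ℂ) (hf : HasFDerivAt f (Df : ℂ →L[ℝ] ℂ) z)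
    (Dh : ℂ →L[ℝ] ℝ) (hh : HasFDerivAt h Dh z)
    (J : ℝ) (hJ : J = LinearMap.det ((Df : ℂ →L[ℝ] ℂ) : ℂ →ₗ[ℝ] ℂ)) (hJne : J ≠ 0) :
    ‖Dh.comp (Df.symm : ℂ →L[ℝ] ℂ)‖^2 =
      (‖(-(Df (z / ((‖z‖ : ℝ) : ℂ))) * (Dh (Complex.I * z / ((‖z‖ : ℝ) : ℂ)) : ℂ)
        + Df (Complex.I * z / ((‖z‖ : ℝ) : ℂ)) * (Dh (z / ((‖z‖ : ℝ) : ℂ)) : ℂ))‖)^2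
      / J^2 := by
  have hDf : ∀ w : ℂ, Df w = w.re • Df 1 + w.im • Df I := fun w =>
    aux_apply (Df : ℂ →L[ℝ] ℂ) w
  have hDh : ∀ w : ℂ, Dh w = w.re * Dh 1 + w.im * Dh I := fun w => by
    rw [aux_apply Dh w]; simp [smul_eq_mul]
  set a := Df 1 with ha
  set b := Df I with hb
  set p := Dh 1 with hp
  set q := Dh I with hq
  have hdet : J = a.re * b.im - a.im * b.re := by
    rw [hJ, aux_det]; rfl
  -- inverse values
  have hDne : a.re * b.im - a.im * b.re ≠ 0 := hdet ▸ hJne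
  have hs1 : Df.symm 1 = ⟨b.im / J, -a.im / J⟩ := by
    rw [ContinuousLinearEquiv.symm_apply_eq, hDf, hdet]
    apply Complex.ext <;>
      simp only [Complex.add_re, Complex.add_im, Complex.smul_re, Complex.smul_im,
        smul_eq_mul, Complex.one_re, Complex.one_im, Complex.I_re, Complex.I_im] <;>
      field_simp <;> ring_nf <;> field_simp <;> refine (div_self (a := (_ : ℝ)) ?_).symm <;> intro h0 <;> apply hDne <;> linarith
  have hsI : Df.symm I = ⟨-b.re / J, a.re / J⟩ := by
    rw [ContinuousLinearEquiv.symm_apply_eq, hDf, hdet]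
    apply Complex.ext <;>
      simp only [Complex.add_re, Complex.add_im, Complex.smul_re, Complex.smul_im,
        smul_eq_mul, Complex.one_re, Complex.one_im, Complex.I_re, Complex.I_im] <;>
      field_simp <;> ring_nf <;> field_simp <;> refine (div_self (a := (_ : ℝ)) ?_).symm <;> intro h0 <;> apply hDne <;> linarith
  set L := Dh.comp (Df.symm : ℂ →L[ℝ] ℂ) with hLdef
  have hL1 : L 1 = (b.im * p - a.im * q) / J := by
    show Dh (Df.symm 1) = _
    rw [hs1, hDh]; simp; ring
  have hLI : L I = (-b.re * p + a.re * q) / J := by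
    show Dh (Df.symm I) = _
    rw [hsI, hDh]; simp; ring
  -- the unit vector
  set u := z / ((‖z‖ : ℝ) : ℂ) with hu_def
  have habs : ‖u‖ = 1 := by
    rw [hu_def, norm_div, Complex.norm_real, Real.norm_eq_abs, abs_norm,
      div_self (norm_ne_zero_iff.mpr hz)]
  have hu : u.re ^ 2 + u.im ^ 2 = 1 := by
    have := Complex.sq_norm u
    rw [habs, Complex.normSq_apply] at this
    nlinarith [this]
  have hIu : Complex.I * z / ((‖z‖ : ℝ) : ℂ) = Complex.I * u := by
    rw [hu_def, mul_div_assoc]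
  have hIure : (Complex.I * u).re = -u.im := by simp
  have hIuim : (Complex.I * u).im = u.re := by simp
  -- the complex combination
  have hc : -(Df u) * (Dh (Complex.I * u) : ℂ) + Df (Complex.I * u) * (Dh u : ℂ)
      = (p : ℂ) * b - (q : ℂ) * a := by
    have hu' : (u.re : ℂ) ^ 2 + (u.im : ℂ) ^ 2 = 1 := by exact_mod_cast hu
    rw [hDf u, hDf (Complex.I * u), hDh u, hDh (Complex.I * u), hIure, hIuim]
    simp only [Complex.real_smul]
    push_cast
    linear_combination ((p : ℂ) * b - (q : ℂ) * a) * hu'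
  rw [hIu, hc, aux_norm L, hL1, hLI, Complex.sq_norm, Complex.normSq_apply]
  simp only [Complex.sub_re, Complex.sub_im, Complex.mul_re, Complex.mul_im,
    Complex.ofReal_re, Complex.ofReal_im]
  field_simp
  ring
end

section
/- Let R : ℝ → (0,∞) be 2π-periodic and differentiable at θ, and define f(re^{iθ}) = R(θ) r e^{iθ} for r > 0. Then the Wirtinger derivatives of f at re^{iθ} are ∂̄f = e^{2iθ} i R′(θ)/2 and ∂f = (2R(θ) − iR′(θ))/2; consequently the complex dilatation μ = ∂̄f/∂f equals e^{2iθ} iR′(θ)/(2R(θ) − iR′(θ)) and satisfies |μ| < 1; and the associated coefficients are a₀ := |e^{2iθ} − μ|²/(1 − |μ|²) = 1 + (R′(θ)/R(θ))², a₁ := |e^{2iθ} + μ|²/(1 − |μ|²) = 1, and a₂ := 2 Im( conj(e^{2iθ} + μ)(e^{2iθ} − μ) )/(1 − |μ|²) = −2 R′(θ)/R(θ). -/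
open scoped Real

private lemma stmt5_aux (a b : ℝ) (ha : 0 < a) (E2 : ℂ) (hE2 : ‖E2‖ = 1) :
    ‖E2 * Complex.I * b / (2*a - Complex.I*b)‖ < 1 ∧
    (‖E2 - E2 * Complex.I * b / (2*a - Complex.I*b)‖)^2
        / (1 - (‖E2 * Complex.I * b / (2*a - Complex.I*b)‖)^2) = 1 + (b/a)^2 ∧
    (‖E2 + E2 * Complex.I * b / (2*a - Complex.I*b)‖)^2
        / (1 - (‖E2 * Complex.I * b / (2*a - Complex.I*b)‖)^2) = 1 ∧
    2 * ((starRingEnd ℂ) (E2 + E2 * Complex.I * b / (2*a - Complex.I*b))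
        * (E2 - E2 * Complex.I * b / (2*a - Complex.I*b))).im
        / (1 - (‖E2 * Complex.I * b / (2*a - Complex.I*b)‖)^2) = -(2*b/a) := by
  open Complex in
  have hane : (a:ℝ) ≠ 0 := ha.ne'
  set d : ℂ := 2*a - Complex.I*b with hd_def
  have hdre : d.re = 2*a := by simp [hd_def]
  have hd : d ≠ 0 := by
    intro h
    rw [Complex.ext_iff] at h
    simp [hdre] at h
    nlinarith [h.1]
  have hE2ne : E2 ≠ 0 := by
    intro h; rw [h] at hE2; simp at hE2
  have hNd : Complex.normSq d = 4*a^2 + b^2 := by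
    simp [hd_def, Complex.normSq_apply, Complex.sub_re, Complex.sub_im, Complex.mul_re,
      Complex.mul_im]
    ring
  have hNpos : (0:ℝ) < 4*a^2 + b^2 := by positivity
  have hNne : (4*a^2 + b^2 : ℝ) ≠ 0 := hNpos.ne'
  have hnE2 : Complex.normSq E2 = 1 := by
    rw [← Complex.sq_norm, hE2]; norm_num
  have hμ2 : (‖E2 * I * ↑b / d‖)^2 = b^2 / (4*a^2 + b^2) := by
    rw [Complex.sq_norm, map_div₀, map_mul, map_mul, hnE2, hNd]
    simp [Complex.normSq_apply]
    ring
  have h1μ2 : 1 - (‖E2 * I * ↑b / d‖)^2 = 4*a^2 / (4*a^2 + b^2) := by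
    rw [hμ2]; field_simp; ring
  have hkey1 : E2 - E2 * I * ↑b / d = E2 * (2*a - 2*I*b) / d := by
    field_simp [hd_def]; ring
  have hkey2 : E2 + E2 * I * ↑b / d = E2 * (2*a) / d := by
    field_simp [hd_def]; ring
  refine ⟨?_, ?_, ?_, ?_⟩
  · have h2 : (‖E2 * I * ↑b / d‖)^2 < 1 := by
      rw [hμ2]; rw [div_lt_one hNpos]; nlinarith
    nlinarith [norm_nonneg (E2 * I * ↑b / d), h2]
  · rw [hkey1, h1μ2, Complex.sq_norm, map_div₀, map_mul, hnE2, hNd, one_mul]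
    have : Complex.normSq (2*↑a - 2*I*↑b) = 4*a^2 + 4*b^2 := by
      simp [Complex.normSq_apply, Complex.sub_re, Complex.sub_im, Complex.mul_re, Complex.mul_im]
      ring
    rw [this]
    field_simp
  · rw [hkey2, h1μ2, Complex.sq_norm, map_div₀, map_mul, hnE2, hNd, one_mul]
    have : Complex.normSq (2*(↑a:ℂ)) = 4*a^2 := by
      simp [Complex.normSq_apply]; ring
    rw [this]
    field_simp
  · rw [hkey1, hkey2, h1μ2]
    have hinv : E2⁻¹ = (starRingEnd ℂ) E2 := Complex.inv_eq_conj hE2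
    have hconj : (starRingEnd ℂ) (E2 * (2*↑a) / d) = E2⁻¹ * (2*↑a) / (2*↑a + I*↑b) := by
      simp [map_div₀, map_mul, hinv, hd_def, Complex.conj_I, Complex.conj_ofReal, map_ofNat]
    rw [hconj]
    have hd' : (2*(↑a:ℂ) + I*↑b) ≠ 0 := by
      intro h
      rw [Complex.ext_iff] at h
      simp [Complex.add_re, Complex.mul_re] at h
      exact hane h.1
    have hNC : ((2*(↑a:ℂ) + I*↑b) * (2*↑a - I*↑b)) = ((4*a^2 + b^2 : ℝ) : ℂ) := by
      push_cast; ring_nf; simp [Complex.I_sq]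
    have hprod : E2⁻¹ * (2*↑a) / (2*↑a + I*↑b) * (E2 * (2*↑a - 2*I*↑b) / d)
        = (2*↑a) * (2*↑a - 2*I*↑b) / (((4*a^2 + b^2 : ℝ)) : ℂ) := by
      rw [← hNC, hd_def]
      field_simp
    have hsplit : (2*(↑a:ℂ)) * (2*↑a - 2*I*↑b) / (((4*a^2 + b^2 : ℝ)) : ℂ)
        = Complex.ofReal (4*a^2/(4*a^2+b^2)) + Complex.ofReal (-(4*a*b)/(4*a^2+b^2)) * I := by
      push_cast
      field_simp
      ring
    rw [hprod, hsplit]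
    simp only [Complex.add_im, Complex.ofReal_im, Complex.mul_im, Complex.I_im, Complex.I_re,
      Complex.ofReal_re, mul_zero, mul_one, zero_add, zero_mul, add_zero]
    field_simp

/-- the starlike stretch map `f(re^{iθ}) = R(θ) r e^{iθ}` has Wirtinger
derivatives `∂̄f = e^{2iθ} i R′(θ)/2` and `∂f = (2R(θ) − iR′(θ))/2` at `re^{iθ}`, hence
complex dilatation `μ = e^{2iθ} iR′(θ)/(2R(θ) − iR′(θ))` with `|μ| < 1`, and the associated
coefficients are `a₀ = 1 + (R′/R)²`, `a₁ = 1`, `a₂ = −2R′/R`.  Here `∂f = (D1 - i·Di)/2`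
and `∂̄f = (D1 + i·Di)/2` where `D` is the real Fréchet derivative of `f`. -/
theorem stmt_5 (R : ℝ → ℝ) (hR_pos : ∀ t, 0 < R t) (hR_per : ∀ t, R (t + 2*π) = R t)
    (θ r : ℝ) (hr : 0 < r) (R' : ℝ) (hR' : HasDerivAt R R' θ)
    (f : ℂ → ℂ)
    (hf : ∀ s : ℝ, 0 < s → ∀ t : ℝ,
      f (s * Complex.exp (t * Complex.I)) = R t * s * Complex.exp (t * Complex.I)) :
    ∃ D : ℂ →L[ℝ] ℂ, HasFDerivAt f D (r * Complex.exp (θ * Complex.I)) ∧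
      (D 1 + Complex.I * D Complex.I) / 2 = Complex.exp (2*θ*Complex.I) * Complex.I * R' / 2 ∧
      (D 1 - Complex.I * D Complex.I) / 2 = (2 * R θ - Complex.I * R') / 2 ∧
      (let μ : ℂ := Complex.exp (2*θ*Complex.I) * Complex.I * R' / (2 * R θ - Complex.I * R')
       ((D 1 + Complex.I * D Complex.I) / 2) / ((D 1 - Complex.I * D Complex.I) / 2) = μ ∧
       ‖μ‖ < 1 ∧
       (‖Complex.exp (2*θ*Complex.I) - μ‖)^2 / (1 - (‖μ‖)^2)
         = 1 + (R' / R θ)^2 ∧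
       (‖Complex.exp (2*θ*Complex.I) + μ‖)^2 / (1 - (‖μ‖)^2) = 1 ∧
       2 * ((starRingEnd ℂ) (Complex.exp (2*θ*Complex.I) + μ)
           * (Complex.exp (2*θ*Complex.I) - μ)).im / (1 - (‖μ‖)^2)
         = -(2 * R' / R θ)) := by
  open Complex in
  set z₀ : ℂ := (r : ℂ) * Complex.exp (θ * I) with hz₀
  have hz₀ne : z₀ ≠ 0 := mul_ne_zero (by exact_mod_cast hr.ne') (Complex.exp_ne_zero _)
  -- z₀ * exp(-θ I) = r
  have hkey : z₀ * Complex.exp (-θ * I) = (r : ℂ) := by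
    rw [hz₀, mul_assoc, ← Complex.exp_add]
    norm_num
  -- the derivative of the local representative g
  have hmul : HasDerivAt (fun z : ℂ => z * Complex.exp (-θ * I)) (Complex.exp (-θ*I)) z₀ := by
    simpa using (hasDerivAt_id z₀).mul_const (Complex.exp (-θ*I))
  have hslit : z₀ * Complex.exp (-θ * I) ∈ Complex.slitPlane := by
    rw [hkey, Complex.mem_slitPlane_iff]
    left; simpa using hr
  have hlog : HasDerivAt (fun z : ℂ => Complex.log (z * Complex.exp (-θ*I)))
      ((z₀ * Complex.exp (-θ*I))⁻¹ * Complex.exp (-θ*I)) z₀ :=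
    by have := (Complex.hasDerivAt_log hslit).comp z₀ hmul; exact this
  set e' : ℂ := (z₀ * Complex.exp (-θ*I))⁻¹ * Complex.exp (-θ*I) with he'
  have hLF : HasFDerivAt (fun z : ℂ => Complex.log (z * Complex.exp (-θ*I)))
      (ContinuousLinearMap.restrictScalars ℝ ((1 : ℂ →L[ℂ] ℂ).smulRight e')) z₀ :=
    (hlog.hasFDerivAt).restrictScalars ℝ
  set Dφ : ℂ →L[ℝ] ℝ :=
    Complex.imCLM.comp (ContinuousLinearMap.restrictScalars ℝ ((1 : ℂ →L[ℂ] ℂ).smulRight e'))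
    with hDφ
  have hφ : HasFDerivAt (fun z : ℂ => θ + (Complex.log (z * Complex.exp (-θ*I))).im) Dφ z₀ :=
    ((Complex.imCLM.hasFDerivAt.comp z₀ hLF)).const_add θ
  have hφz₀ : θ + (Complex.log (z₀ * Complex.exp (-θ*I))).im = θ := by
    rw [hkey, Complex.log_im, Complex.arg_ofReal_of_nonneg hr.le, add_zero]
  have hRφ : HasFDerivAt
      (fun z : ℂ => R (θ + (Complex.log (z * Complex.exp (-θ*I))).im)) (R' • Dφ) z₀ :=
    HasDerivAt.comp_hasFDerivAt z₀ (by rw [hφz₀]; exact hR') hφ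
  have hg : HasFDerivAt
      (fun z : ℂ => (R (θ + (Complex.log (z * Complex.exp (-θ*I))).im) : ℝ) • z)
      ((R (θ + (Complex.log (z₀ * Complex.exp (-θ*I))).im) : ℝ) •
        (ContinuousLinearMap.id ℝ ℂ) + (R' • Dφ).smulRight z₀) z₀ :=
    hRφ.smul (hasFDerivAt_id z₀)
  rw [hφz₀] at hg
  set D : ℂ →L[ℝ] ℂ :=
    (R θ : ℝ) • (ContinuousLinearMap.id ℝ ℂ) + (R' • Dφ).smulRight z₀ with hD
  -- f agrees with g near z₀
  have hfg : f =ᶠ[nhds z₀]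
      (fun z : ℂ => (R (θ + (Complex.log (z * Complex.exp (-θ*I))).im) : ℝ) • z) := by
    filter_upwards [compl_singleton_mem_nhds hz₀ne] with z hz
    have hzne : z ≠ (0:ℂ) := hz
    set t : ℝ := θ + (z * Complex.exp (-θ*I)).arg with ht
    have hs : (0:ℝ) < ‖z‖ := norm_pos_iff.mpr hzne
    have hzeq : (‖z‖ : ℂ) * Complex.exp (t * I) = z := by
      have h1 : Complex.exp ((t:ℂ) * I)
          = Complex.exp (θ * I) * Complex.exp (((z * Complex.exp (-θ*I)).arg : ℂ) * I) := by
        rw [← Complex.exp_add, ht]; push_cast; ring_nf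
      have h2 : (‖z * Complex.exp (-θ*I)‖ : ℂ) *
          Complex.exp (((z * Complex.exp (-θ*I)).arg : ℂ) * I) = z * Complex.exp (-θ*I) :=
        Complex.norm_mul_exp_arg_mul_I _
      have h3 : ‖z * Complex.exp (-θ*I)‖ = ‖z‖ := by
        rw [norm_mul]
        have : (-(θ:ℂ)*I) = ((-θ : ℝ) : ℂ) * I := by push_cast; ring
        rw [this, Complex.norm_exp_ofReal_mul_I, mul_one]
      have h4 : Complex.exp ((θ:ℂ) * I) * Complex.exp (-(θ:ℂ)*I) = 1 := by
        rw [← Complex.exp_add]; ring_nf; exact Complex.exp_zero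
      rw [h1, ← h3]
      calc (‖z * Complex.exp (-θ*I)‖ : ℂ) *
            (Complex.exp ((θ:ℂ)*I) * Complex.exp (((z * Complex.exp (-θ*I)).arg : ℂ) * I))
          = Complex.exp ((θ:ℂ)*I) * ((‖z * Complex.exp (-θ*I)‖ : ℂ) *
              Complex.exp (((z * Complex.exp (-θ*I)).arg : ℂ) * I)) := by ring
        _ = Complex.exp ((θ:ℂ)*I) * (z * Complex.exp (-θ*I)) := by rw [h2]
        _ = z * (Complex.exp ((θ:ℂ)*I) * Complex.exp (-(θ:ℂ)*I)) := by ring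
        _ = z := by rw [h4, mul_one]
    have hfz := hf (‖z‖) hs t
    rw [hzeq] at hfz
    show f z = (R (θ + (Complex.log (z * Complex.exp (-θ*I))).im) : ℝ) • z
    rw [Complex.log_im, ← ht, hfz, Complex.real_smul, mul_assoc, hzeq]
  have hF : HasFDerivAt f D z₀ := hg.congr_of_eventuallyEq hfg
  -- compute D on 1 and I
  have hDw : ∀ w : ℂ, D w = (R θ : ℂ) * w + ((R' * (w * e').im : ℝ) : ℂ) * z₀ := by
    intro w
    simp [hD, hDφ, ContinuousLinearMap.add_apply, ContinuousLinearMap.smul_apply,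
      ContinuousLinearMap.smulRight_apply, ContinuousLinearMap.coe_comp',
      ContinuousLinearMap.coe_restrictScalars', ContinuousLinearMap.id_apply,
      Complex.imCLM_apply, Complex.real_smul, smul_eq_mul]
  have he'val : e' = ((r:ℂ))⁻¹ * Complex.exp (-θ*I) := by rw [he', hkey]
  have him1 : ((1:ℂ) * e').im = -Real.sin θ / r := by
    rw [he'val, one_mul, ← Complex.ofReal_inv]
    simp [Complex.exp_im, Complex.exp_re]
    ring
  have himI : ((I:ℂ) * e').im = Real.cos θ / r := by
    rw [he'val, ← Complex.ofReal_inv]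
    simp [Complex.mul_im, Complex.exp_im, Complex.exp_re]
    ring
  have hE2eq : Complex.exp (2*(θ:ℂ)*I) = Complex.exp ((θ:ℂ)*I) * Complex.exp ((θ:ℂ)*I) := by
    rw [← Complex.exp_add]; ring_nf
  have hEcs : Complex.exp ((θ:ℂ)*I) = (Real.cos θ : ℂ) + (Real.sin θ : ℂ) * I := by
    rw [Complex.exp_mul_I, Complex.ofReal_cos, Complex.ofReal_sin]
  have hsc : ((Real.sin θ : ℂ))^2 + ((Real.cos θ : ℂ))^2 = 1 := by
    have := Real.sin_sq_add_cos_sq θ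
    exact_mod_cast congrArg (Complex.ofReal) this
  have hrne : (r:ℝ) ≠ 0 := hr.ne'
  have hrC : ((r:ℂ)) ≠ 0 := Complex.ofReal_ne_zero.mpr hrne
  have hterm : ∀ x : ℝ, ((R' * (x / r) : ℝ) : ℂ) * z₀ = (R' : ℂ) * (x : ℂ) * Complex.exp ((θ:ℂ)*I) := by
    intro x
    rw [hz₀]
    push_cast
    field_simp
  have hpd : (D 1 + Complex.I * D Complex.I) / 2 = Complex.exp (2*θ*I) * I * R' / 2 := by
    rw [hDw, hDw, him1, himI]
    rw [show (-Real.sin θ / r) = ((-Real.sin θ) / r) from rfl, hterm, hterm, hE2eq, hEcs]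
    push_cast
    linear_combination (((R θ : ℂ) - (R' : ℂ) * Complex.sin θ * Complex.cos θ
      - (R' : ℂ) * Complex.sin θ ^ 2 * Complex.I)/2) * Complex.I_sq
  have hmd : (D 1 - Complex.I * D Complex.I) / 2 = (2 * R θ - Complex.I * R') / 2 := by
    rw [hDw, hDw, him1, himI]
    rw [show (-Real.sin θ / r) = ((-Real.sin θ) / r) from rfl, hterm, hterm, hEcs]
    push_cast
    linear_combination ((-(R θ : ℂ) - (R' : ℂ) * Complex.sin θ * Complex.cos θ)/2) * Complex.I_sq
      + ((-(R' : ℂ) * Complex.I)/2) * (Complex.sin_sq_add_cos_sq (θ:ℂ))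
  have hE2abs : ‖Complex.exp (2*(θ:ℂ)*I)‖ = 1 := by
    have h : (2*(θ:ℂ)*I) = ((2*θ : ℝ) : ℂ) * I := by push_cast; ring
    rw [h, Complex.norm_exp_ofReal_mul_I]
  have hdne : ((2 * R θ : ℂ) - Complex.I * R') ≠ 0 := by
    intro h
    rw [Complex.ext_iff] at h
    simp at h
    exact (hR_pos θ).ne' h.1
  obtain ⟨hlt, ha0, ha1, ha2⟩ := stmt5_aux (R θ) R' (hR_pos θ) (Complex.exp (2*(θ:ℂ)*I)) hE2abs
  refine ⟨D, hF, hpd, hmd, ?_, ?_, ?_, ?_, ?_⟩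
  · rw [hpd, hmd]
    field_simp
  · exact hlt
  · exact ha0
  · exact ha1
  · exact ha2
end

section
/- Let A > 0 be real and B ∈ ℂ with |B| < A, and set c = B/A. Define h(ζ) = (A + 2 Re( conj(ζ) B ) + |ζ|² A)/(1 − |ζ|²) for ζ in the open unit disk { |ζ| < 1 }. Then the minimum of h over the open unit disk equals √(A² − |B|²), and it is attained at exactly one point, namely ζ_min = −c/(1 + √(1 − |c|²)). -/
/-- for real `A > 0` and `B ∈ ℂ` with `|B| < A`, the function
`h(ζ) = (A + 2 Re(conj(ζ) B) + |ζ|² A)/(1 − |ζ|²)` on the open unit disk attains the minimum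
value `√(A² − |B|²)` at the unique point `ζ_min = −c/(1 + √(1 − |c|²))`, where `c = B/A`. -/
theorem stmt_8 (A : ℝ) (hA : 0 < A) (B : ℂ) (hB : ‖B‖ < A) :
    let c : ℂ := B / (A : ℂ)
    let ζmin : ℂ := -c / ((1 : ℂ) + (Real.sqrt (1 - (‖c‖)^2) : ℂ))
    let h : ℂ → ℝ := fun ζ =>
      (A + 2 * ((starRingEnd ℂ) ζ * B).re + (‖ζ‖)^2 * A) / (1 - (‖ζ‖)^2)
    ‖ζmin‖ < 1 ∧
    h ζmin = Real.sqrt (A^2 - (‖B‖)^2) ∧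
    ∀ ζ : ℂ, ‖ζ‖ < 1 →
      Real.sqrt (A^2 - (‖B‖)^2) ≤ h ζ ∧
      (h ζ = Real.sqrt (A^2 - (‖B‖)^2) → ζ = ζmin) := by
  intro c ζmin h
  set m := Real.sqrt (A^2 - (‖B‖)^2) with hm
  have hB0 : (0:ℝ) ≤ ‖B‖ := norm_nonneg B
  have hm0 : (0:ℝ) ≤ m := Real.sqrt_nonneg _
  have hmsq : m^2 = A^2 - (‖B‖)^2 := Real.sq_sqrt (by nlinarith)
  have hs : (0:ℝ) < A + m := by linarith
  have hAne : (A:ℂ) ≠ 0 := by exact_mod_cast hA.ne'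
  have hζmin : ζmin = -B / (((A + m : ℝ)):ℂ) := by
    have habsc : ‖c‖ = ‖B‖ / A := by
      simp [c, norm_div, Complex.norm_real, Real.norm_eq_abs, abs_of_pos hA]
    have h1 : 1 - (‖c‖)^2 = (m/A)^2 := by
      rw [habsc]; field_simp; linarith [hmsq]
    have h2 : Real.sqrt (1 - (‖c‖)^2) = m / A := by
      rw [h1, Real.sqrt_sq (by positivity)]
    have hsne : (((A + m : ℝ)):ℂ) ≠ 0 := by exact_mod_cast hs.ne'
    have hne2 : (1:ℂ) + ((m/A : ℝ):ℂ) ≠ 0 := by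
      have : ((1 + m/A : ℝ):ℂ) ≠ 0 := by
        exact_mod_cast (by positivity : (0:ℝ) < 1 + m/A).ne'
      push_cast at this ⊢; exact this
    show -c / ((1 : ℂ) + (Real.sqrt (1 - (‖c‖)^2) : ℂ)) = _
    rw [h2]
    show -(B / (A:ℂ)) / ((1:ℂ) + ((m/A : ℝ):ℂ)) = _
    rw [div_eq_div_iff hne2 hsne]
    push_cast
    field_simp
  have key : ∀ ζ : ℂ, A + 2*((starRingEnd ℂ) ζ * B).re + (‖ζ‖)^2*A
      = m*(1 - (‖ζ‖)^2) + (A+m)*(‖ζ - ζmin‖)^2 := by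
    intro ζ
    rw [hζmin]
    have hb : (‖B‖)^2 = B.re^2 + B.im^2 := by
      rw [Complex.sq_norm, Complex.normSq_apply]; ring
    have hmsq' : m^2 = A^2 - (B.re^2 + B.im^2) := by rw [hmsq, hb]
    rw [Complex.sq_norm, Complex.sq_norm, Complex.normSq_apply, Complex.normSq_apply]
    simp only [Complex.sub_re, Complex.sub_im, Complex.neg_re, Complex.neg_im,
      Complex.div_ofReal_re, Complex.div_ofReal_im, Complex.mul_re, Complex.mul_im,
      Complex.conj_re, Complex.conj_im]
    have hsne : A + m ≠ 0 := hs.ne'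
    field_simp
    nlinarith [hmsq', sq_nonneg (A+m)]
  have hlt : ‖ζmin‖ < 1 := by
    rw [hζmin, norm_div, norm_neg]
    simp only [Complex.norm_real, Real.norm_eq_abs, abs_of_pos hs]
    rw [div_lt_one hs]
    linarith
  have hd0 : (0:ℝ) < 1 - (‖ζmin‖)^2 := by
    nlinarith [norm_nonneg ζmin]
  refine ⟨hlt, ?_, ?_⟩
  · show (A + 2 * ((starRingEnd ℂ) ζmin * B).re + (‖ζmin‖)^2 * A) /
      (1 - (‖ζmin‖)^2) = m
    rw [show A + 2 * ((starRingEnd ℂ) ζmin * B).re + (‖ζmin‖)^2 * A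
        = A + 2*((starRingEnd ℂ) ζmin * B).re + (‖ζmin‖)^2*A by ring,
      key ζmin, sub_self, norm_zero, zero_pow two_ne_zero, mul_zero, add_zero]
    field_simp
  · intro ζ hζ
    have hd : (0:ℝ) < 1 - (‖ζ‖)^2 := by nlinarith [norm_nonneg ζ]
    have hval : h ζ = m + (A+m)*(‖ζ - ζmin‖)^2 / (1 - (‖ζ‖)^2) := by
      show (A + 2 * ((starRingEnd ℂ) ζ * B).re + (‖ζ‖)^2 * A) /
        (1 - (‖ζ‖)^2) = _
      rw [show A + 2 * ((starRingEnd ℂ) ζ * B).re + (‖ζ‖)^2 * A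
        = A + 2*((starRingEnd ℂ) ζ * B).re + (‖ζ‖)^2*A by ring, key ζ]
      field_simp
    constructor
    · rw [hval]
      have : (0:ℝ) ≤ (A+m)*(‖ζ - ζmin‖)^2 / (1 - (‖ζ‖)^2) := by
        positivity
      linarith
    · intro heq
      rw [hval] at heq
      have hx : ‖ζ - ζmin‖ = 0 := by
        by_contra hx
        have hx' : 0 < ‖ζ - ζmin‖ :=
          lt_of_le_of_ne (norm_nonneg _) (Ne.symm hx)
        have : (0:ℝ) < (A+m)*(‖ζ - ζmin‖)^2 / (1 - (‖ζ‖)^2) := by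
          positivity
        linarith
      have : ζ - ζmin = 0 := by rwa [norm_eq_zero] at hx
      exact sub_eq_zero.mp this
end

section
/- Let A > 0 be real and B ∈ ℂ with |B| < A, and set c = B/A. Then the equation B + 2Aζ + conj(B) ζ² = 0 has exactly one solution ζ in the open unit disk { |ζ| < 1 }, namely ζ = −c/(1 + √(1 − |c|²)). (In particular, if B = 0 the unique solution in the disk is ζ = 0.) -/
/-- for real `A > 0` and `B ∈ ℂ` with `|B| < A`, the quadratic equation
`B + 2Aζ + conj(B) ζ² = 0` has exactly one solution in the open unit disk, namely
`ζ = −c/(1 + √(1 − |c|²))` with `c = B/A`; in particular if `B = 0` that solution is `0`. -/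
theorem stmt_9 (A : ℝ) (hA : 0 < A) (B : ℂ) (hB : ‖B‖ < A) :
    let c : ℂ := B / (A : ℂ)
    let ζmin : ℂ := -c / ((1 : ℂ) + (Real.sqrt (1 - ‖c‖^2) : ℂ))
    ‖ζmin‖ < 1 ∧
    B + 2 * A * ζmin + (starRingEnd ℂ) B * ζmin^2 = 0 ∧
    (∀ ζ : ℂ, ‖ζ‖ < 1 →
      B + 2 * A * ζ + (starRingEnd ℂ) B * ζ^2 = 0 → ζ = ζmin) ∧
    (B = 0 → ζmin = 0) := by
  intro c ζmin
  have hA0 : (A : ℂ) ≠ 0 := by exact_mod_cast hA.ne'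
  have hcabs : ‖c‖ = ‖B‖ / A := by
    simp [c, norm_div, Complex.norm_real, abs_of_pos hA]
  have hc1 : ‖c‖ < 1 := by
    rw [hcabs, div_lt_one hA]; exact hB
  have hnn : 0 ≤ 1 - ‖c‖^2 := by nlinarith [norm_nonneg c]
  set s : ℝ := Real.sqrt (1 - ‖c‖^2) with hsdef
  have hs0 : 0 ≤ s := Real.sqrt_nonneg _
  have hs2 : s ^ 2 = 1 - ‖c‖^2 := Real.sq_sqrt hnn
  have hu0 : ((1 : ℂ) + (s : ℂ)) ≠ 0 := by
    intro h
    have h' := congrArg Complex.re h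
    simp at h'
    linarith
  have habsu : ‖(1 : ℂ) + (s : ℂ)‖ = 1 + s := by
    rw [show ((1:ℂ) + (s:ℂ)) = (((1+s : ℝ)):ℂ) by push_cast; ring, Complex.norm_real, Real.norm_eq_abs,
      abs_of_pos (by linarith)]
  have h1 : ‖ζmin‖ < 1 := by
    have : ‖ζmin‖ = ‖c‖ / (1 + s) := by
      simp [ζmin, norm_div, norm_neg, ← hsdef, habsu]
    rw [this]
    rw [div_lt_one (by linarith : (0:ℝ) < 1 + s)]
    linarith
  have hBB : (starRingEnd ℂ) B * B = ((‖B‖ : ℝ)^2 : ℂ) := by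
    rw [mul_comm, Complex.mul_conj, Complex.normSq_eq_norm_sq]
    push_cast; ring
  have hs2c : ((s : ℂ))^2 * (A : ℂ)^2 = (A : ℂ)^2 - ((‖B‖ : ℝ)^2 : ℂ) := by
    have hr : s ^ 2 * A ^ 2 = A ^ 2 - ‖B‖^2 := by
      rw [hs2, hcabs]; field_simp
    exact_mod_cast congrArg (Complex.ofReal) hr
  have hz : ζmin * ((1:ℂ) + (s:ℂ)) = -c := by
    simp only [ζmin, ← hsdef]
    field_simp
  have hc' : c * (A:ℂ) = B := by
    simp only [c]
    field_simp
  have heqmin : B + 2 * A * ζmin + (starRingEnd ℂ) B * ζmin ^ 2 = 0 := by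
    have hmul : (B + 2 * A * ζmin + (starRingEnd ℂ) B * ζmin ^ 2) *
        (((1:ℂ) + (s:ℂ))^2 * (A:ℂ)^2) = 0 := by
      linear_combination (2*(A:ℂ)^3*((1:ℂ)+(s:ℂ)) +
          (A:ℂ)^2*(starRingEnd ℂ) B*(ζmin*((1:ℂ)+(s:ℂ)) - c)) * hz +
        (-2*(A:ℂ)^2*((1:ℂ)+(s:ℂ)) + (starRingEnd ℂ) B*(c*(A:ℂ)+B)) * hc' +
        B * hBB + B * hs2c
    rcases mul_eq_zero.mp hmul with h | h
    · exact h
    · exact absurd h (mul_ne_zero (pow_ne_zero 2 hu0) (pow_ne_zero 2 hA0))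
  refine ⟨h1, heqmin, ?_, ?_⟩
  · intro ζ hζ heq
    have hfac : (ζ - ζmin) * (2 * (A:ℂ) + (starRingEnd ℂ) B * (ζ + ζmin)) = 0 := by
      linear_combination heq - heqmin
    have hne : (2 * (A:ℂ) + (starRingEnd ℂ) B * (ζ + ζmin)) ≠ 0 := by
      intro h
      have hX : (starRingEnd ℂ) B * (ζ + ζmin) = -(2 * (A:ℂ)) := by
        linear_combination h
      have habs : ‖(starRingEnd ℂ) B * (ζ + ζmin)‖ = 2 * A := by
        rw [hX]
        rw [show -(2 * (A:ℂ)) = (((-(2*A)) : ℝ) : ℂ) by push_cast; ring]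
        rw [Complex.norm_real, Real.norm_eq_abs, abs_of_neg (by linarith)]
        ring
      have hle : ‖(starRingEnd ℂ) B * (ζ + ζmin)‖ < 2 * A := by
        rw [norm_mul, Complex.norm_conj]
        calc ‖B‖ * ‖ζ + ζmin‖
            ≤ ‖B‖ * (‖ζ‖ + ‖ζmin‖) := by
              exact mul_le_mul_of_nonneg_left (norm_add_le _ _) (norm_nonneg B)
          _ < A * 2 := mul_lt_mul'' hB (by linarith) (norm_nonneg B)
                (by positivity)
          _ = 2 * A := by ring
      exact absurd habs (by linarith [hle] : _ ≠ _)
    have := mul_eq_zero.mp hfac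
    rcases this with h | h
    · exact sub_eq_zero.mp h
    · exact absurd h hne
  · intro h0
    simp [ζmin, c, h0]
end

section
/- Let γ : [0,L] → ℝ² be measurable and N : [0,L] → ℝ² be measurable with |N(s)| = 1 for all s, and let U ⊂ ℝ² be an open convex set such that (γ(s) − ω) · N(s) > 0 for all s ∈ [0,L] and all ω ∈ U. Assume ω ↦ ∫₀^L |γ(s) − ω|²/((γ(s) − ω)·N(s)) ds is finite on U. Then this function of ω is convex on U; moreover, if for every ω ∈ U the image {γ(s) : s ∈ [0,L]} is not contained in a single line through ω (more precisely: for every ω ∈ U and every nonzero y ∈ ℝ², the set of s with γ(s) − ω not parallel to y has positive measure), then the function is strictly convex on U. -/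
open MeasureTheory
open scoped RealInnerProductSpace

section Key
variable {E : Type*} [NormedAddCommGroup E] [InnerProductSpace ℝ E]

lemma key_poly (u v : E) (p q a b : ℝ) :
    (a * p + b * q) * (a * q * ‖u‖^2 + b * p * ‖v‖^2)
      - (p * q) * ‖a • u + b • v‖^2
      = a * b * ‖q • u - p • v‖^2 := by
  have e1 : ‖a • u + b • v‖^2 = a^2*‖u‖^2 + 2*(a*b)*⟪u,v⟫ + b^2*‖v‖^2 := by
    rw [@norm_add_sq_real, real_inner_smul_left, real_inner_smul_right,
      norm_smul, norm_smul]
    simp [mul_pow, sq_abs]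
    ring
  have e2 : ‖q • u - p • v‖^2 = q^2*‖u‖^2 - 2*(q*p)*⟪u,v⟫ + p^2*‖v‖^2 := by
    rw [@norm_sub_sq_real, real_inner_smul_left, real_inner_smul_right,
      norm_smul, norm_smul]
    simp [mul_pow, sq_abs]
    ring
  rw [e1, e2]; ring

lemma key_le (u v n : E) (hp : 0 < ⟪u, n⟫) (hq : 0 < ⟪v, n⟫)
    {a b : ℝ} (ha : 0 ≤ a) (hb : 0 ≤ b) (hab : a + b = 1) :
    ‖a • u + b • v‖^2 / ⟪a • u + b • v, n⟫
      ≤ a * (‖u‖^2 / ⟪u, n⟫) + b * (‖v‖^2 / ⟪v, n⟫) := by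
  set p := ⟪u, n⟫ with hpdef
  set q := ⟪v, n⟫ with hqdef
  have hD : ⟪a • u + b • v, n⟫ = a * p + b * q := by
    rw [inner_add_left, real_inner_smul_left, real_inner_smul_left]
  have hDpos : 0 < a * p + b * q := by
    rcases ha.eq_or_lt with h | h
    · have : b = 1 := by linarith
      simp [← h, this, hq]
    · nlinarith
  have hR : a * (‖u‖^2 / p) + b * (‖v‖^2 / q)
      = (a * q * ‖u‖^2 + b * p * ‖v‖^2) / (p * q) := by
    field_simp
  rw [hD, hR, div_le_div_iff₀ hDpos (mul_pos hp hq)]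
  have := key_poly u v p q a b
  nlinarith [sq_nonneg ‖q • u - p • v‖, mul_nonneg (mul_nonneg ha hb) (sq_nonneg ‖q • u - p • v‖)]

lemma key_lt (u v n : E) (hp : 0 < ⟪u, n⟫) (hq : 0 < ⟪v, n⟫)
    {a b : ℝ} (ha : 0 < a) (hb : 0 < b) (hab : a + b = 1)
    (hne : ⟪v, n⟫ • u ≠ ⟪u, n⟫ • v) :
    ‖a • u + b • v‖^2 / ⟪a • u + b • v, n⟫
      < a * (‖u‖^2 / ⟪u, n⟫) + b * (‖v‖^2 / ⟪v, n⟫) := by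
  set p := ⟪u, n⟫ with hpdef
  set q := ⟪v, n⟫ with hqdef
  have hD : ⟪a • u + b • v, n⟫ = a * p + b * q := by
    rw [inner_add_left, real_inner_smul_left, real_inner_smul_left]
  have hDpos : 0 < a * p + b * q := by nlinarith
  have hR : a * (‖u‖^2 / p) + b * (‖v‖^2 / q)
      = (a * q * ‖u‖^2 + b * p * ‖v‖^2) / (p * q) := by
    field_simp
  have hw : (0:ℝ) < ‖q • u - p • v‖^2 := by
    have : q • u - p • v ≠ 0 := sub_ne_zero.mpr hne
    exact pow_pos (norm_pos_iff.mpr this) 2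
  rw [hD, hR, div_lt_div_iff₀ hDpos (mul_pos hp hq)]
  have := key_poly u v p q a b
  nlinarith [mul_pos (mul_pos ha hb) hw]

lemma comb_sub {ω₁ ω₂ x : E} {a b : ℝ} (hab : a + b = 1) :
    x - (a • ω₁ + b • ω₂) = a • (x - ω₁) + b • (x - ω₂) := by
  have hb' : b = 1 - a := by linarith
  subst hb'; module

end Key

/-- the function `ω ↦ ∫₀^L |γ(s) − ω|²/((γ(s) − ω)·N(s)) ds` is convex on an
open convex set `U` on which `(γ(s) − ω)·N(s) > 0`, and it is strictly convex provided that
for every `ω ∈ U` and every nonzero direction `y` the set of `s` with `γ(s) − ω` not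
parallel to `y` has positive measure. -/
theorem stmt_13 (L : ℝ) (hL : 0 < L)
    (γ N : ℝ → EuclideanSpace ℝ (Fin 2))
    (hγ : Measurable γ) (hN : Measurable N)
    (hN_unit : ∀ s ∈ Set.Icc (0:ℝ) L, ‖N s‖ = 1)
    (U : Set (EuclideanSpace ℝ (Fin 2))) (hU_open : IsOpen U) (hU_conv : Convex ℝ U)
    (hpos : ∀ s ∈ Set.Icc (0:ℝ) L, ∀ ω ∈ U, 0 < ⟪γ s - ω, N s⟫)
    (hfin : ∀ ω ∈ U,
      IntegrableOn (fun s => ‖γ s - ω‖^2 / ⟪γ s - ω, N s⟫) (Set.Icc (0:ℝ) L)) :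
    ConvexOn ℝ U (fun ω => ∫ s in Set.Icc (0:ℝ) L, ‖γ s - ω‖^2 / ⟪γ s - ω, N s⟫) ∧
    ((∀ ω ∈ U, ∀ y : EuclideanSpace ℝ (Fin 2), y ≠ 0 →
        0 < volume {s ∈ Set.Icc (0:ℝ) L | ¬ ∃ t : ℝ, γ s - ω = t • y}) →
      StrictConvexOn ℝ U
        (fun ω => ∫ s in Set.Icc (0:ℝ) L, ‖γ s - ω‖^2 / ⟪γ s - ω, N s⟫)) := by
  set F : EuclideanSpace ℝ (Fin 2) → ℝ → ℝ :=
    fun ω s => ‖γ s - ω‖^2 / ⟪γ s - ω, N s⟫ with hF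
  constructor
  · refine ⟨hU_conv, ?_⟩
    intro ω₁ h₁ ω₂ h₂ a b ha hb hab
    have hmid : a • ω₁ + b • ω₂ ∈ U := hU_conv h₁ h₂ ha hb hab
    have hint1 := hfin ω₁ h₁
    have hint2 := hfin ω₂ h₂
    have hintm := hfin _ hmid
    have hptwise : ∀ s ∈ Set.Icc (0:ℝ) L,
        F (a • ω₁ + b • ω₂) s ≤ a * F ω₁ s + b * F ω₂ s := by
      intro s hs
      simp only [hF]
      rw [comb_sub hab]
      exact key_le _ _ _ (hpos s hs ω₁ h₁) (hpos s hs ω₂ h₂) ha hb hab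
    calc ∫ s in Set.Icc (0:ℝ) L, F (a • ω₁ + b • ω₂) s
        ≤ ∫ s in Set.Icc (0:ℝ) L, (a * F ω₁ s + b * F ω₂ s) :=
          setIntegral_mono_on hintm ((hint1.const_mul a).add (hint2.const_mul b))
            measurableSet_Icc hptwise
      _ = a • (∫ s in Set.Icc (0:ℝ) L, F ω₁ s) + b • (∫ s in Set.Icc (0:ℝ) L, F ω₂ s) := by
          rw [integral_add (hint1.const_mul a) (hint2.const_mul b),
            integral_const_mul, integral_const_mul]
          simp only [smul_eq_mul]
          rfl
  · intro hyp
    refine ⟨hU_conv, ?_⟩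
    intro ω₁ h₁ ω₂ h₂ hω12 a b ha hb hab
    have hmid : a • ω₁ + b • ω₂ ∈ U := hU_conv h₁ h₂ ha.le hb.le hab
    set ωc := a • ω₁ + b • ω₂ with hωc
    set y := ω₂ - ω₁ with hy
    have hy0 : y ≠ 0 := sub_ne_zero.mpr (Ne.symm hω12)
    have hint1 := hfin ω₁ h₁
    have hint2 := hfin ω₂ h₂
    have hintm := hfin _ hmid
    set S := {s ∈ Set.Icc (0:ℝ) L | ¬ ∃ t : ℝ, γ s - ωc = t • y} with hSdef
    have hSpos : 0 < volume S := hyp ωc hmid y hy0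
    set g : ℝ → ℝ := fun s => (a * F ω₁ s + b * F ω₂ s) - F ωc s with hg
    have hgle : ∀ s ∈ Set.Icc (0:ℝ) L, 0 ≤ g s := by
      intro s hs
      have := key_le (γ s - ω₁) (γ s - ω₂) (N s) (hpos s hs ω₁ h₁) (hpos s hs ω₂ h₂)
        ha.le hb.le hab
      rw [← comb_sub hab] at this
      simp only [hg, hF, sub_nonneg]
      exact this
    have hglt : ∀ s ∈ S, 0 < g s := by
      intro s hs
      obtain ⟨hsI, hnpar⟩ := hs
      set u := γ s - ω₁ with hu
      set v := γ s - ω₂ with hv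
      have hp := hpos s hsI ω₁ h₁
      have hq := hpos s hsI ω₂ h₂
      have hne : ⟪v, N s⟫ • u ≠ ⟪u, N s⟫ • v := by
        intro heq
        apply hnpar
        set p := ⟪u, N s⟫
        set q := ⟪v, N s⟫
        have hyuv : y = u - v := by simp only [hy, hu, hv]; abel
        have h1 : p • y = (p - q) • u := by
          rw [hyuv, smul_sub, ← heq, sub_smul]
        have h2 : p • (γ s - ωc) = (a * p + b * q) • u := by
          rw [comb_sub hab, smul_add, smul_comm p b v, ← heq]
          module
        rcases eq_or_ne p q with hpq | hpq
        · exfalso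
          apply hy0
          have : p • y = 0 := by rw [h1, hpq, sub_self, zero_smul]
          exact (smul_eq_zero.mp this).resolve_left hp.ne'
        · refine ⟨(a * p + b * q) / (p - q), ?_⟩
          apply smul_right_injective _ hp.ne'
          show p • (γ s - ωc) = p • (((a * p + b * q) / (p - q)) • y)
          rw [h2, smul_comm, h1, smul_smul, div_mul_cancel₀ _ (sub_ne_zero.mpr hpq)]
      have := key_lt u v (N s) hp hq ha hb hab hne
      rw [← comb_sub hab] at this
      simp only [hg, hF, sub_pos]
      exact this
    have hgint : IntegrableOn g (Set.Icc (0:ℝ) L) :=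
      ((hint1.const_mul a).add (hint2.const_mul b)).sub hintm
    have h_ae : 0 ≤ᵐ[volume.restrict (Set.Icc (0:ℝ) L)] g :=
      (ae_restrict_iff' measurableSet_Icc).2 (ae_of_all _ hgle)
    have hSsub : S ⊆ Function.support g := fun s hs => (hglt s hs).ne'
    have hpos_int : 0 < ∫ s in Set.Icc (0:ℝ) L, g s := by
      rw [integral_pos_iff_support_of_nonneg_ae h_ae hgint]
      calc (0:ENNReal) < volume S := hSpos
        _ = (volume.restrict (Set.Icc (0:ℝ) L)) S := by
            rw [Measure.restrict_apply' measurableSet_Icc,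
              Set.inter_eq_left.mpr (fun s hs => hs.1)]
        _ ≤ (volume.restrict (Set.Icc (0:ℝ) L)) (Function.support g) :=
            measure_mono hSsub
    have hsplit : ∫ s in Set.Icc (0:ℝ) L, g s
        = (∫ s in Set.Icc (0:ℝ) L, (a * F ω₁ s + b * F ω₂ s))
          - ∫ s in Set.Icc (0:ℝ) L, F ωc s := by
      exact integral_sub ((hint1.const_mul a).add (hint2.const_mul b)) hintm
    rw [hsplit, sub_pos, integral_add (hint1.const_mul a) (hint2.const_mul b),
      integral_const_mul, integral_const_mul] at hpos_int
    simp only [smul_eq_mul]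
    exact hpos_int
end

section
/- Let N ≥ 5 be an integer and define p(θ) = |sin(Nθ/2)|^{−2/N} for θ ∈ (0, 2π) (away from the zeros of sin(Nθ/2)). Then (1/2π)∫₀^{2π} p(θ) dθ = (1/π) B(1/2 − 1/N, 1/2) and (1/2π)∫₀^{2π} p(θ)² dθ = (1/π) B(1/2 − 2/N, 1/2), where B is the Euler beta function; consequently the conformal geometric factor satisfies √( [(1/2π)∫₀^{2π} p² dθ] / [(1/2π)∫₀^{2π} p dθ]² ) = Γ(1 − 4/N)^{1/2} Γ(1 − 1/N)² / Γ(1 − 2/N)². -/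
open MeasureTheory
open scoped Real


namespace Stmt16
open Set

lemma real_beta {u v : ℝ} (hu : 0 < u) (hv : 0 < v) :
    Real.Gamma u * Real.Gamma v =
      Real.Gamma (u + v) * ∫ x in (0:ℝ)..1, x ^ (u-1) * (1-x) ^ (v-1) := by
  have h := Complex.Gamma_mul_Gamma_eq_betaIntegral (s := (u:ℂ)) (t := (v:ℂ))
    (by simpa using hu) (by simpa using hv)
  have hβ : Complex.betaIntegral u v
      = ((∫ x in (0:ℝ)..1, x ^ (u-1) * (1-x) ^ (v-1) : ℝ) : ℂ) := by
    rw [Complex.betaIntegral, ← intervalIntegral.integral_ofReal]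
    apply intervalIntegral.integral_congr
    intro x hx
    rw [Set.uIcc_of_le (by norm_num : (0:ℝ) ≤ 1)] at hx
    show _ = ((x ^ (u - 1) * (1 - x) ^ (v - 1) : ℝ) : ℂ)
    rw [Complex.ofReal_mul, Complex.ofReal_cpow hx.1,
      Complex.ofReal_cpow (by linarith [hx.2] : (0:ℝ) ≤ 1 - x)]
    push_cast
    ring
  rw [hβ, ← Complex.ofReal_add, Complex.Gamma_ofReal, Complex.Gamma_ofReal,
    Complex.Gamma_ofReal] at h
  exact_mod_cast h

lemma beta_integrable {u v : ℝ} (hu : 0 < u) (hv : 0 < v) :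
    IntegrableOn (fun x : ℝ => x ^ (u-1) * (1-x) ^ (v-1)) (Ioo (0:ℝ) 1) := by
  have hc : IntervalIntegrable
      (fun x : ℝ => (x:ℂ) ^ ((u:ℂ)-1) * (1-(x:ℂ)) ^ ((v:ℂ)-1)) volume 0 1 :=
    Complex.betaIntegral_convergent (by simpa using hu) (by simpa using hv)
  have hn := hc.norm
  rw [intervalIntegrable_iff_integrableOn_Ioc_of_le (by norm_num)] at hn
  refine ((hn.mono_set Ioo_subset_Ioc_self).congr_fun ?_ measurableSet_Ioo)
  intro x hx
  dsimp only
  rw [norm_mul,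
    show (1:ℂ) - (x:ℂ) = ((1-x:ℝ):ℂ) by push_cast; ring,
    Complex.norm_cpow_eq_rpow_re_of_pos hx.1,
    Complex.norm_cpow_eq_rpow_re_of_pos (by linarith [hx.2] : (0:ℝ) < 1 - x)]
  norm_num

section
variable {a : ℝ}

lemma sq_sin_deriv : ∀ θ ∈ Ioo (0:ℝ) (π/2),
    HasDerivWithinAt (fun θ => Real.sin θ ^ 2) (2 * Real.sin θ * Real.cos θ)
      (Ioo (0:ℝ) (π/2)) θ := by
  intro θ _
  have h := ((Real.hasDerivAt_sin θ).pow 2).hasDerivWithinAt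
    (s := Ioo (0:ℝ) (π/2))
  exact h.congr_deriv (by norm_num)

lemma sq_sin_mono : StrictMonoOn (fun θ => Real.sin θ ^ 2) (Icc (0:ℝ) (π/2)) := by
  intro x hx y hy hxy
  have hsx : 0 ≤ Real.sin x := Real.sin_nonneg_of_nonneg_of_le_pi hx.1
    (by linarith [Real.pi_pos, hx.2])
  have h : Real.sin x < Real.sin y := Real.strictMonoOn_sin
    ⟨by linarith [Real.pi_pos, hx.1], hx.2⟩ ⟨by linarith [Real.pi_pos, hy.1], hy.2⟩ hxy
  exact pow_lt_pow_left₀ h hsx two_ne_zero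

lemma sq_sin_image : (fun θ => Real.sin θ ^ 2) '' Ioo (0:ℝ) (π/2) = Ioo 0 1 := by
  apply Subset.antisymm
  · rintro _ ⟨θ, hθ, rfl⟩
    have h1 := sq_sin_mono (left_mem_Icc.2 (by positivity)) (Ioo_subset_Icc_self hθ) hθ.1
    have h2 := sq_sin_mono (Ioo_subset_Icc_self hθ) (right_mem_Icc.2 (by positivity)) hθ.2
    simp only [Real.sin_zero, Real.sin_pi_div_two, ne_eq, OfNat.ofNat_ne_zero,
      not_false_eq_true, zero_pow, one_pow] at h1 h2
    exact ⟨h1, h2⟩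
  · have := intermediate_value_Ioo (a := (0:ℝ)) (b := π/2) (by positivity)
      (Continuous.continuousOn (by continuity) : ContinuousOn (fun θ => Real.sin θ ^ 2) _)
    simpa [Real.sin_pi_div_two] using this

lemma cov_pointwise {θ : ℝ} (hθ : θ ∈ Ioo (0:ℝ) (π/2)) :
    |2 * Real.sin θ * Real.cos θ| •
      ((Real.sin θ ^ 2 : ℝ) ^ ((a+1)/2-1) * (1 - Real.sin θ ^ 2) ^ ((1:ℝ)/2-1))
      = 2 * Real.sin θ ^ a := by
  have hs : 0 < Real.sin θ := Real.sin_pos_of_pos_of_lt_pi hθ.1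
    (by linarith [Real.pi_pos, hθ.2])
  have hc : 0 < Real.cos θ := Real.cos_pos_of_mem_Ioo
    ⟨by linarith [Real.pi_pos, hθ.1], hθ.2⟩
  have h1 : (1:ℝ) - Real.sin θ ^ 2 = Real.cos θ ^ 2 := by
    have := Real.sin_sq_add_cos_sq θ; linarith
  have h2 : (Real.sin θ ^ 2 : ℝ) ^ ((a+1)/2-1) = Real.sin θ ^ (a - 1) := by
    rw [← Real.rpow_natCast (Real.sin θ) 2, ← Real.rpow_mul hs.le]
    norm_num
    ring_nf
  have h3 : (Real.cos θ ^ 2 : ℝ) ^ ((1:ℝ)/2-1) = (Real.cos θ)⁻¹ := by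
    rw [← Real.rpow_natCast (Real.cos θ) 2, ← Real.rpow_mul hc.le]
    norm_num [Real.rpow_neg_one]
  have h4 : Real.sin θ * Real.sin θ ^ (a-1) = Real.sin θ ^ a := by
    nth_rewrite 1 [← Real.rpow_one (Real.sin θ)]
    rw [← Real.rpow_add hs]; ring_nf
  simp only [smul_eq_mul, h1, h2, h3]
  rw [abs_of_pos (by positivity)]
  field_simp
  nlinarith [h4]

lemma cov :
    (∫ x in Ioo (0:ℝ) 1, x ^ ((a+1)/2-1) * (1-x) ^ ((1:ℝ)/2-1))
      = ∫ θ in Ioo (0:ℝ) (π/2), 2 * Real.sin θ ^ a := by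
  have h := integral_image_eq_integral_abs_deriv_smul (s := Ioo (0:ℝ) (π/2))
    measurableSet_Ioo sq_sin_deriv (sq_sin_mono.injOn.mono Ioo_subset_Icc_self)
    (fun x => x ^ ((a+1)/2-1) * (1-x) ^ ((1:ℝ)/2-1))
  rw [sq_sin_image] at h
  rw [h]
  exact setIntegral_congr_fun measurableSet_Ioo fun θ hθ => cov_pointwise hθ

lemma half_integrable (ha1 : -1 < a) :
    IntegrableOn (fun θ => Real.sin θ ^ a) (Ioo (0:ℝ) (π/2)) := by
  have hu : 0 < (a+1)/2 := by linarith
  have h := (integrableOn_image_iff_integrableOn_abs_deriv_smul (s := Ioo (0:ℝ) (π/2))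
    measurableSet_Ioo sq_sin_deriv (sq_sin_mono.injOn.mono Ioo_subset_Icc_self)
    (fun x => x ^ ((a+1)/2-1) * (1-x) ^ ((1:ℝ)/2-1))).mp
    (by rw [sq_sin_image]; exact beta_integrable hu (by norm_num))
  have h2 : IntegrableOn (fun θ => 2 * Real.sin θ ^ a) (Ioo (0:ℝ) (π/2)) :=
    h.congr_fun (fun θ hθ => cov_pointwise hθ) measurableSet_Ioo
  have heq : (fun θ => Real.sin θ ^ a) = fun θ => (1/2 : ℝ) * (2 * Real.sin θ ^ a) := by
    funext θ; ring
  rw [heq]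
  exact h2.const_mul _

lemma refl_deriv : ∀ θ ∈ Ioo (π/2) π,
    HasDerivWithinAt (fun θ : ℝ => π - θ) (-1) (Ioo (π/2) π) θ := fun θ _ =>
  ((hasDerivAt_id θ).const_sub π).hasDerivWithinAt

lemma refl_image : (fun θ : ℝ => π - θ) '' Ioo (π/2) π = Ioo 0 (π/2) := by
  rw [image_const_sub_Ioo, sub_self, show π - π/2 = π/2 by ring]

lemma refl_eq :
    (∫ θ in Ioo (π/2) π, Real.sin θ ^ a) = ∫ θ in Ioo (0:ℝ) (π/2), Real.sin θ ^ a := by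
  have h := integral_image_eq_integral_abs_deriv_smul (s := Ioo (π/2) π)
    measurableSet_Ioo refl_deriv (fun x _ y _ h => sub_right_injective h)
    (fun θ => Real.sin θ ^ a)
  rw [refl_image] at h
  rw [h]
  refine setIntegral_congr_fun measurableSet_Ioo fun θ _ => ?_
  simp [Real.sin_pi_sub]

lemma refl_integrable (ha1 : -1 < a) :
    IntegrableOn (fun θ => Real.sin θ ^ a) (Ioo (π/2) π) := by
  have h := (integrableOn_image_iff_integrableOn_abs_deriv_smul (s := Ioo (π/2) π)
    measurableSet_Ioo refl_deriv (fun x _ y _ h => sub_right_injective h)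
    (fun θ => Real.sin θ ^ a)).mp (by rw [refl_image]; exact half_integrable ha1)
  refine h.congr_fun (fun θ _ => by simp [Real.sin_pi_sub]) measurableSet_Ioo

lemma union_ae : (Ioo (0:ℝ) (π/2) ∪ Ioo (π/2) π : Set ℝ) =ᵐ[volume] Ioo (0:ℝ) π := by
  rw [Filter.eventuallyEq_set]
  have : ∀ᵐ x : ℝ, x ≠ π/2 := by
    simp [ae_iff]
  filter_upwards [this] with x hx
  constructor
  · rintro (⟨h1, h2⟩ | ⟨h1, h2⟩) <;> constructor <;> try linarith [Real.pi_pos]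
  · rintro ⟨h1, h2⟩
    rcases lt_or_gt_of_ne hx with h | h
    · exact Or.inl ⟨h1, h⟩
    · exact Or.inr ⟨h, h2⟩

lemma sin_nonneg_Ioc {θ : ℝ} (hθ : θ ∈ Ioc (0:ℝ) π) : |Real.sin θ| ^ a = Real.sin θ ^ a := by
  rw [abs_of_nonneg (Real.sin_nonneg_of_nonneg_of_le_pi hθ.1.le hθ.2)]

lemma base_integral (ha1 : -1 < a) :
    (∫ θ in Ioc (0:ℝ) π, |Real.sin θ| ^ a)
      = Real.Gamma ((a+1)/2) * Real.Gamma (1/2) / Real.Gamma ((a+1)/2 + 1/2) := by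
  have hu : 0 < (a+1)/2 := by linarith
  have huv : (0:ℝ) < (a+1)/2 + 1/2 := by linarith
  have hbeta := real_beta hu (by norm_num : (0:ℝ) < 1/2)
  have hval : (∫ x in (0:ℝ)..1, x ^ ((a+1)/2-1) * (1-x) ^ ((1:ℝ)/2-1))
      = Real.Gamma ((a+1)/2) * Real.Gamma (1/2) / Real.Gamma ((a+1)/2 + 1/2) := by
    rw [eq_div_iff (Real.Gamma_pos_of_pos huv).ne']
    linarith [hbeta]
  rw [intervalIntegral.integral_of_le (by norm_num : (0:ℝ) ≤ 1),
    integral_Ioc_eq_integral_Ioo, cov] at hval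
  calc (∫ θ in Ioc (0:ℝ) π, |Real.sin θ| ^ a)
      = ∫ θ in Ioc (0:ℝ) π, Real.sin θ ^ a :=
        setIntegral_congr_fun measurableSet_Ioc fun θ hθ => sin_nonneg_Ioc hθ
    _ = ∫ θ in Ioo (0:ℝ) π, Real.sin θ ^ a := integral_Ioc_eq_integral_Ioo
    _ = ∫ θ in (Ioo (0:ℝ) (π/2) ∪ Ioo (π/2) π), Real.sin θ ^ a :=
        (setIntegral_congr_set union_ae).symm
    _ = (∫ θ in Ioo (0:ℝ) (π/2), Real.sin θ ^ a) + ∫ θ in Ioo (π/2) π, Real.sin θ ^ a := by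
        apply setIntegral_union _ measurableSet_Ioo (half_integrable ha1) (refl_integrable ha1)
        rw [Set.disjoint_left]; rintro x ⟨_, h2⟩ ⟨h3, _⟩; linarith
    _ = ∫ θ in Ioo (0:ℝ) (π/2), 2 * Real.sin θ ^ a := by
        rw [refl_eq, ← integral_add (half_integrable ha1) (half_integrable ha1)]
        exact setIntegral_congr_fun measurableSet_Ioo fun θ _ => by ring
    _ = _ := hval

lemma base_integrableOn (ha1 : -1 < a) : IntegrableOn (fun θ => |Real.sin θ| ^ a) (Ioc (0:ℝ) π) := by
  have h : IntegrableOn (fun θ => Real.sin θ ^ a) (Ioo (0:ℝ) (π/2) ∪ Ioo (π/2) π) :=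
    (half_integrable ha1).union (refl_integrable ha1)
  have h2 : IntegrableOn (fun θ => Real.sin θ ^ a) (Ioo (0:ℝ) π) :=
    h.congr_set_ae union_ae.symm
  have h3 : IntegrableOn (fun θ => Real.sin θ ^ a) (Ioc (0:ℝ) π) :=
    h2.congr_set_ae Ioo_ae_eq_Ioc.symm
  exact h3.congr_fun (fun θ hθ => (sin_nonneg_Ioc hθ).symm) measurableSet_Ioc

lemma per : Function.Periodic (fun θ => |Real.sin θ| ^ a) π := fun x => by
  simp [Real.sin_add_pi]

lemma base_ii (ha1 : -1 < a) :
    IntervalIntegrable (fun θ => |Real.sin θ| ^ a) volume 0 π :=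
  (intervalIntegrable_iff_integrableOn_Ioc_of_le Real.pi_pos.le).mpr (base_integrableOn ha1)

lemma piece_ii (ha1 : -1 < a) (k : ℕ) :
    IntervalIntegrable (fun θ => |Real.sin θ| ^ a) volume ((k:ℝ)*π) (((k:ℝ)+1)*π) := by
  have h := (base_ii ha1).comp_sub_right ((k:ℝ)*π)
  have he : (fun x => (fun θ => |Real.sin θ| ^ a) (x - (k:ℝ)*π))
      = fun θ => |Real.sin θ| ^ a := by
    funext x; exact per.sub_nat_mul_eq k
  rw [he] at h
  rw [show ((k:ℝ))*π = 0 + (k:ℝ)*π by ring, show ((k:ℝ)+1)*π = π + (k:ℝ)*π by ring]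
  exact h

lemma piece_eq (k : ℕ) :
    (∫ θ in ((k:ℝ)*π)..(((k:ℝ)+1)*π), |Real.sin θ| ^ a)
      = ∫ θ in (0:ℝ)..π, |Real.sin θ| ^ a := by
  have h := intervalIntegral.integral_comp_add_right (a := (0:ℝ)) (b := π)
    (fun θ => |Real.sin θ| ^ a) ((k:ℝ)*π)
  have he : (fun x => (fun θ => |Real.sin θ| ^ a) (x + (k:ℝ)*π))
      = fun θ => |Real.sin θ| ^ a := by
    funext x; exact (per.nat_mul k) x
  rw [he] at h
  rw [show ((k:ℝ))*π = 0 + (k:ℝ)*π by ring, show ((k:ℝ)+1)*π = π + (k:ℝ)*π by ring]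
  exact h.symm

lemma big (ha1 : -1 < a) (n : ℕ) :
    (∫ θ in (0:ℝ)..((n:ℝ)*π), |Real.sin θ| ^ a)
      = n * ∫ θ in (0:ℝ)..π, |Real.sin θ| ^ a := by
  have h := intervalIntegral.sum_integral_adjacent_intervals
    (a := fun k : ℕ => (k:ℝ)*π) (n := n) (μ := volume)
    (f := fun θ => |Real.sin θ| ^ a) (fun k _ => by
      have := piece_ii ha1 k
      simpa using this)
  simp only [Nat.cast_zero, zero_mul] at h
  rw [← h]
  rw [Finset.sum_congr rfl (fun k _ => by
    simpa using piece_eq (a := a) k)]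
  simp [Finset.sum_const, nsmul_eq_mul]

lemma master (ha1 : -1 < a) {N : ℕ} (hN : 1 ≤ N) :
    (∫ θ in Ioc (0:ℝ) (2*π), |Real.sin ((N:ℝ) * θ / 2)| ^ a)
      = 2 * (Real.Gamma ((a+1)/2) * Real.Gamma (1/2) / Real.Gamma ((a+1)/2 + 1/2)) := by
  have hNR : (0:ℝ) < N := by exact_mod_cast hN
  have h0 : (∫ θ in Ioc (0:ℝ) (2*π), |Real.sin ((N:ℝ)*θ/2)| ^ a)
      = ∫ θ in (0:ℝ)..(2*π), |Real.sin ((N:ℝ)*θ/2)| ^ a :=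
    (intervalIntegral.integral_of_le (by positivity)).symm
  rw [h0]
  have h1 : (∫ θ in (0:ℝ)..(2*π), |Real.sin ((N:ℝ)*θ/2)| ^ a)
      = ∫ θ in (0:ℝ)..(2*π), (fun u => |Real.sin u| ^ a) (((N:ℝ)/2)*θ) := by
    apply intervalIntegral.integral_congr
    intro θ _
    show |Real.sin ((N:ℝ)*θ/2)| ^ a = |Real.sin ((N:ℝ)/2*θ)| ^ a
    rw [show (N:ℝ)*θ/2 = (N:ℝ)/2*θ by ring]
  have h2 := intervalIntegral.integral_comp_mul_left (a := (0:ℝ)) (b := 2*π)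
    (c := (N:ℝ)/2) (fun u => |Real.sin u| ^ a) (by positivity : (N:ℝ)/2 ≠ 0)
  rw [h1, h2]
  rw [show (N:ℝ)/2*(2*π) = (N:ℝ)*π by ring, mul_zero, big ha1 N,
    intervalIntegral.integral_of_le Real.pi_pos.le, base_integral ha1]
  rw [smul_eq_mul]
  have hN0 : (N:ℝ) ≠ 0 := hNR.ne'
  generalize Real.Gamma ((a+1)/2) * Real.Gamma (1/2) / Real.Gamma ((a+1)/2 + 1/2) = G
  field_simp
end
end Stmt16
lemma gamma_alg {x : ℝ} (hx : 0 < x) (hx4 : x < 1/4) :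
    Real.sqrt ((1/π * (Real.Gamma (1/2-2*x) * Real.Gamma (1/2) / Real.Gamma (1-2*x))) /
      (1/π * (Real.Gamma (1/2-x) * Real.Gamma (1/2) / Real.Gamma (1-x)))^2)
    = Real.sqrt (Real.Gamma (1-4*x)) * Real.Gamma (1-x)^2 / Real.Gamma (1-2*x)^2 := by
  have hA : 0 < Real.Gamma (1/2-2*x) := Real.Gamma_pos_of_pos (by linarith)
  have hC : 0 < Real.Gamma (1-2*x) := Real.Gamma_pos_of_pos (by linarith)
  have hD : 0 < Real.Gamma (1-4*x) := Real.Gamma_pos_of_pos (by linarith)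
  have hE : 0 < Real.Gamma (1/2-x) := Real.Gamma_pos_of_pos (by linarith)
  have hF : 0 < Real.Gamma (1-x) := Real.Gamma_pos_of_pos (by linarith)
  have hsπ : 0 < Real.sqrt π := Real.sqrt_pos.mpr Real.pi_pos
  have hq : (0:ℝ) < (2:ℝ) ^ (4*x) := Real.rpow_pos_of_pos two_pos _
  have hr : (0:ℝ) < (2:ℝ) ^ (2*x) := Real.rpow_pos_of_pos two_pos _
  have h1 := Real.Gamma_mul_Gamma_add_half (1/2-2*x)
  have h2 := Real.Gamma_mul_Gamma_add_half (1/2-x)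
  rw [show (1-2*(1/2-2*x) : ℝ) = 4*x by ring, show (2*(1/2-2*x) : ℝ) = 1-4*x by ring,
    show (1/2-2*x+1/2 : ℝ) = 1-2*x by ring] at h1
  rw [show (1-2*(1/2-x) : ℝ) = 2*x by ring, show (2*(1/2-x) : ℝ) = 1-2*x by ring,
    show (1/2-x+1/2 : ℝ) = 1-x by ring] at h2
  have h3 : (2:ℝ) ^ (2*x) * (2:ℝ) ^ (2*x) = (2:ℝ) ^ (4*x) := by
    rw [← Real.rpow_add two_pos]; ring_nf
  have h4 : Real.sqrt π * Real.sqrt π = π := Real.mul_self_sqrt Real.pi_pos.le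
  have hGhalf : Real.Gamma (1/2) = Real.sqrt π := Real.Gamma_one_half_eq
  have inner : (1/π * (Real.Gamma (1/2-2*x) * Real.Gamma (1/2) / Real.Gamma (1-2*x))) /
      (1/π * (Real.Gamma (1/2-x) * Real.Gamma (1/2) / Real.Gamma (1-x)))^2
      = Real.Gamma (1-4*x) * (Real.Gamma (1-x)^2 / Real.Gamma (1-2*x)^2)^2 := by
    have hAe : Real.Gamma (1/2-2*x)
        = Real.Gamma (1-4*x) * (2:ℝ)^(4*x) * Real.sqrt π / Real.Gamma (1-2*x) := by
      rw [eq_div_iff hC.ne']; linarith [h1]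
    have hEe : Real.Gamma (1/2-x)
        = Real.Gamma (1-2*x) * (2:ℝ)^(2*x) * Real.sqrt π / Real.Gamma (1-x) := by
      rw [eq_div_iff hF.ne']; linarith [h2]
    rw [hGhalf, hAe, hEe]
    rw [← h3]
    generalize Real.sqrt π = s at h4 hsπ ⊢
    rw [← h4]
    field_simp
  rw [inner, Real.sqrt_mul hD.le, Real.sqrt_sq (by positivity), mul_div_assoc]

/-- for the Schwarz–Christoffel boundary weight `p(θ) = |sin(Nθ/2)|^{−2/N}` of
the regular `N`-gon (`N ≥ 5`), the first two moments are beta-function values, and the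
conformal geometric factor equals `Γ(1−4/N)^{1/2} Γ(1−1/N)² / Γ(1−2/N)²`.  Here the Euler
beta function is `B(a,b) = Γ(a)Γ(b)/Γ(a+b)`. -/
theorem stmt_16 (N : ℕ) (hN : 5 ≤ N) :
    let p : ℝ → ℝ := fun θ => |Real.sin (N * θ / 2)| ^ (-(2 / (N:ℝ)))
    let B : ℝ → ℝ → ℝ := fun a b => Real.Gamma a * Real.Gamma b / Real.Gamma (a + b)
    (1/(2*π)) * (∫ θ in Set.Ioc (0:ℝ) (2*π), p θ) = (1/π) * B (1/2 - 1/(N:ℝ)) (1/2) ∧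
    (1/(2*π)) * (∫ θ in Set.Ioc (0:ℝ) (2*π), (p θ)^2) = (1/π) * B (1/2 - 2/(N:ℝ)) (1/2) ∧
    Real.sqrt (((1/(2*π)) * ∫ θ in Set.Ioc (0:ℝ) (2*π), (p θ)^2) /
        ((1/(2*π)) * ∫ θ in Set.Ioc (0:ℝ) (2*π), p θ)^2) =
      Real.sqrt (Real.Gamma (1 - 4/(N:ℝ))) * Real.Gamma (1 - 1/(N:ℝ))^2
        / Real.Gamma (1 - 2/(N:ℝ))^2 := by
  intro p B
  have hN1 : 1 ≤ N := le_trans (by norm_num) hN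
  have hN5 : (5:ℝ) ≤ (N:ℝ) := by exact_mod_cast hN
  have hNR : (0:ℝ) < (N:ℝ) := by linarith
  have ha1 : (-1:ℝ) < -(2/(N:ℝ)) := by
    have : 2/(N:ℝ) < 1 := by rw [div_lt_one hNR]; linarith
    linarith
  have ha2 : (-1:ℝ) < -(4/(N:ℝ)) := by
    have : 4/(N:ℝ) < 1 := by rw [div_lt_one hNR]; linarith
    linarith
  have e1 : (1/(2*π)) * (∫ θ in Set.Ioc (0:ℝ) (2*π), p θ)
      = (1/π) * B (1/2 - 1/(N:ℝ)) (1/2) := by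
    show (1/(2*π)) * (∫ θ in Set.Ioc (0:ℝ) (2*π), |Real.sin ((N:ℝ) * θ / 2)| ^ (-(2/(N:ℝ))))
      = (1/π) * (Real.Gamma (1/2 - 1/(N:ℝ)) * Real.Gamma (1/2)
          / Real.Gamma (1/2 - 1/(N:ℝ) + 1/2))
    rw [Stmt16.master ha1 hN1,
      show ((-(2/(N:ℝ))+1)/2) = 1/2 - 1/(N:ℝ) by ring]
    ring
  have hp2 : ∀ θ : ℝ, (p θ)^2 = |Real.sin ((N:ℝ) * θ / 2)| ^ (-(4/(N:ℝ))) := by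
    intro θ
    show (|Real.sin ((N:ℝ) * θ / 2)| ^ (-(2/(N:ℝ))))^2 = _
    rw [← Real.rpow_natCast (|Real.sin ((N:ℝ) * θ / 2)| ^ (-(2/(N:ℝ)))) 2,
      ← Real.rpow_mul (abs_nonneg _),
      show (-(2/(N:ℝ)) * ((2:ℕ):ℝ)) = -(4/(N:ℝ)) by push_cast; ring]
  have hi2 : (∫ θ in Set.Ioc (0:ℝ) (2*π), (p θ)^2)
      = ∫ θ in Set.Ioc (0:ℝ) (2*π), |Real.sin ((N:ℝ) * θ / 2)| ^ (-(4/(N:ℝ))) :=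
    setIntegral_congr_fun measurableSet_Ioc fun θ _ => hp2 θ
  have e2 : (1/(2*π)) * (∫ θ in Set.Ioc (0:ℝ) (2*π), (p θ)^2)
      = (1/π) * B (1/2 - 2/(N:ℝ)) (1/2) := by
    show _ = (1/π) * (Real.Gamma (1/2 - 2/(N:ℝ)) * Real.Gamma (1/2)
          / Real.Gamma (1/2 - 2/(N:ℝ) + 1/2))
    rw [hi2, Stmt16.master ha2 hN1,
      show ((-(4/(N:ℝ))+1)/2) = 1/2 - 2/(N:ℝ) by ring]
    ring
  refine ⟨e1, e2, ?_⟩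
  rw [e1, e2]
  have hx : 0 < 1/(N:ℝ) := by positivity
  have hx4 : 1/(N:ℝ) < 1/4 := by
    rw [div_lt_div_iff₀ hNR four_pos]; linarith
  have h := gamma_alg hx hx4
  rw [show (2*(1/(N:ℝ))) = 2/(N:ℝ) by ring, show (4*(1/(N:ℝ))) = 4/(N:ℝ) by ring] at h
  show Real.sqrt ((1/π * (Real.Gamma (1/2 - 2/(N:ℝ)) * Real.Gamma (1/2)
        / Real.Gamma (1/2 - 2/(N:ℝ) + 1/2))) /
      (1/π * (Real.Gamma (1/2 - 1/(N:ℝ)) * Real.Gamma (1/2)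
        / Real.Gamma (1/2 - 1/(N:ℝ) + 1/2)))^2) = _
  rw [show (1/2 - 2/(N:ℝ) + 1/2) = 1 - 2/(N:ℝ) by ring,
    show (1/2 - 1/(N:ℝ) + 1/2) = 1 - 1/(N:ℝ) by ring]
  exact h
end

section
/- Let 0 ≤ ε < 1 and define R(θ) = √(1 − ε²)/√(1 − ε² cos²θ) for θ ∈ [0, 2π]. Then 1 + (1/2π)∫₀^{2π} (R′(θ)/R(θ))² dθ = (1 − ε²/2)/√(1 − ε²), and (1/2π)∫₀^{2π} ( R(θ)² + R′(θ)² ) dθ = (1 − ε² + ε⁴/8)/√(1 − ε²). -/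
open MeasureTheory intervalIntegral
open scoped Real

lemma st18_u_pos (ε : ℝ) (hε0 : 0 ≤ ε) (hε1 : ε < 1) (θ : ℝ) :
    0 < 1 - ε^2 * Real.cos θ ^ 2 := by
  nlinarith [Real.cos_sq_le_one θ, sq_nonneg ε, sq_nonneg (ε * Real.cos θ)]

lemma st18_hasDerivAt_u (ε θ : ℝ) :
    HasDerivAt (fun t => 1 - ε^2 * Real.cos t ^ 2) (2 * ε^2 * Real.cos θ * Real.sin θ) θ := by
  have h := (hasDerivAt_const θ (1:ℝ)).sub (((Real.hasDerivAt_cos θ).pow 2).const_mul (ε^2))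
  refine h.congr_deriv (Eq.symm ?_)
  simp
  ring

lemma st18_hasDerivAt_R (ε θ : ℝ) (hε0 : 0 ≤ ε) (hε1 : ε < 1) :
    HasDerivAt (fun t => Real.sqrt (1 - ε^2) / Real.sqrt (1 - ε^2 * Real.cos t ^ 2))
      (-(Real.sqrt (1 - ε^2) * (ε^2 * Real.cos θ * Real.sin θ)) /
        (Real.sqrt (1 - ε^2 * Real.cos θ ^ 2) * (1 - ε^2 * Real.cos θ ^ 2))) θ := by
  have hu0 : 0 < 1 - ε^2 * Real.cos θ ^ 2 := by
    nlinarith [Real.cos_sq_le_one θ, sq_nonneg (ε * Real.cos θ), sq_nonneg ε]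
  have hS0 : 0 < Real.sqrt (1 - ε^2 * Real.cos θ ^ 2) := Real.sqrt_pos.2 hu0
  have hS2 : Real.sqrt (1 - ε^2 * Real.cos θ ^ 2) ^ 2 = 1 - ε^2 * Real.cos θ ^ 2 :=
    Real.sq_sqrt hu0.le
  have hsq := (st18_hasDerivAt_u ε θ).sqrt hu0.ne'
  have h := (hasDerivAt_const θ (Real.sqrt (1 - ε^2))).div hsq hS0.ne'
  refine h.congr_deriv (Eq.symm ?_)
  rw [hS2]
  field_simp
  ring

lemma st18_hasDerivAt_Phi (ε b θ : ℝ) (hb2 : b^2 = 1 - ε^2) (hb0 : 0 < b) (hb1 : b ≤ 1) :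
    HasDerivAt (fun t => t - Real.arctan ((b-1) * (Real.sin t * Real.cos t) /
        (1 - Real.cos t ^ 2 + b * Real.cos t ^ 2)))
      (b / (1 - ε^2 * Real.cos θ ^ 2)) θ := by
  have hsq : Real.sin θ ^ 2 = 1 - Real.cos θ ^ 2 := by
    nlinarith [Real.sin_sq_add_cos_sq θ]
  have hD0 : 0 < 1 - Real.cos θ ^ 2 + b * Real.cos θ ^ 2 := by
    nlinarith [Real.cos_sq_le_one θ, sq_nonneg (Real.cos θ)]
  have hu0 : 0 < 1 - ε^2 * Real.cos θ ^ 2 := by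
    nlinarith [Real.cos_sq_le_one θ, sq_nonneg (b * Real.cos θ), sq_nonneg (Real.cos θ)]
  have hN : HasDerivAt (fun t => (b-1) * (Real.sin t * Real.cos t))
      ((b-1) * (Real.cos θ * Real.cos θ + Real.sin θ * -Real.sin θ)) θ :=
    ((Real.hasDerivAt_sin θ).mul (Real.hasDerivAt_cos θ)).const_mul (b-1)
  have hD : HasDerivAt (fun t => 1 - Real.cos t ^ 2 + b * Real.cos t ^ 2)
      (0 - (2 * Real.cos θ ^ 1 * -Real.sin θ) + b * (2 * Real.cos θ ^ 1 * -Real.sin θ)) θ := by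
    have hc2 := (Real.hasDerivAt_cos θ).pow 2
    exact ((hasDerivAt_const θ (1:ℝ)).sub hc2).add (hc2.const_mul b)
  have hfull := (hasDerivAt_id θ).sub (hN.div hD hD0.ne').arctan
  refine hfull.congr_deriv (Eq.symm ?_)
  simp only [Pi.mul_apply, Pi.div_apply]
  have key2 : ((b-1) * (Real.cos θ * Real.cos θ + Real.sin θ * -Real.sin θ)) *
        (1 - Real.cos θ ^ 2 + b * Real.cos θ ^ 2)
      - ((b-1) * (Real.sin θ * Real.cos θ)) *
        (0 - (2 * Real.cos θ ^ 1 * -Real.sin θ) + b * (2 * Real.cos θ ^ 1 * -Real.sin θ))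
      = (1 - ε^2 * Real.cos θ ^ 2) - b := by
    linear_combination ((b-1)*(2*(b-1)*Real.cos θ^2 - (1 - Real.cos θ^2 + b*Real.cos θ^2))) * hsq
      + Real.cos θ^2 * hb2
  have e1 : 1 + ((b-1) * (Real.sin θ * Real.cos θ) / (1 - Real.cos θ ^ 2 + b * Real.cos θ ^ 2))^2
      = (1 - ε^2 * Real.cos θ ^ 2)/(1 - Real.cos θ ^ 2 + b * Real.cos θ ^ 2)^2 := by
    field_simp
    linear_combination ((b-1)^2 * Real.cos θ^2) * hsq + Real.cos θ^2 * hb2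
  rw [e1, key2]
  field_simp
  ring

lemma st18_F1 (ε b θ : ℝ) (hε0 : 0 ≤ ε) (hε1 : ε < 1)
    (hb2 : b^2 = 1 - ε^2) (hb0 : 0 < b) (hb1 : b ≤ 1) :
    HasDerivAt (fun t => (1+(1-ε^2))/(2*b) * (t - Real.arctan ((b-1) * (Real.sin t * Real.cos t) /
        (1 - Real.cos t ^ 2 + b * Real.cos t ^ 2)))
      - t - ε^2/2 * (Real.sin t * Real.cos t / (1 - ε^2 * Real.cos t ^ 2)))
      (ε^4 * (Real.cos θ * Real.sin θ)^2 / (1 - ε^2 * Real.cos θ ^ 2)^2) θ := by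
  have hsq : Real.sin θ ^ 2 = 1 - Real.cos θ ^ 2 := by
    nlinarith [Real.sin_sq_add_cos_sq θ]
  have hu0 : 0 < 1 - ε^2 * Real.cos θ ^ 2 := st18_u_pos ε hε0 hε1 θ
  have hΦ := (st18_hasDerivAt_Phi ε b θ hb2 hb0 hb1).const_mul ((1+(1-ε^2))/(2*b))
  have hsc := (Real.hasDerivAt_sin θ).mul (Real.hasDerivAt_cos θ)
  have hB := (hsc.div (st18_hasDerivAt_u ε θ) hu0.ne').const_mul (ε^2/2)
  have h := (hΦ.sub (hasDerivAt_id θ)).sub hB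
  refine h.congr_deriv (Eq.symm ?_)
  simp only [Pi.mul_apply, Pi.div_apply]
  field_simp
  ring_nf
  simp only [hsq, show Real.sin θ ^ 4 = (1 - Real.cos θ ^ 2) ^ 2 by rw [← hsq]; ring]
  ring

lemma st18_F2 (ε b θ : ℝ) (hε0 : 0 ≤ ε) (hε1 : ε < 1)
    (hb2 : b^2 = 1 - ε^2) (hb0 : 0 < b) (hb1 : b ≤ 1) :
    HasDerivAt (fun t => (1 + 6*(1-ε^2) + (1-ε^2)^2)/(8*b)
        * (t - Real.arctan ((b-1) * (Real.sin t * Real.cos t) /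
          (1 - Real.cos t ^ 2 + b * Real.cos t ^ 2)))
      + ε^2*(1+(1-ε^2))/8 * (Real.sin t * Real.cos t / (1 - ε^2 * Real.cos t ^ 2))
      - (1-ε^2)*ε^2/4 * (Real.sin t * Real.cos t / (1 - ε^2 * Real.cos t ^ 2)^2))
      ((1-ε^2) / (1 - ε^2 * Real.cos θ ^ 2)
        + (1-ε^2) * ε^4 * (Real.cos θ * Real.sin θ)^2 / (1 - ε^2 * Real.cos θ ^ 2)^3) θ := by
  have hsq : Real.sin θ ^ 2 = 1 - Real.cos θ ^ 2 := by
    nlinarith [Real.sin_sq_add_cos_sq θ]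
  have hu0 : 0 < 1 - ε^2 * Real.cos θ ^ 2 := st18_u_pos ε hε0 hε1 θ
  have hu20 : (1 - ε^2 * Real.cos θ ^ 2)^2 ≠ 0 := pow_ne_zero 2 hu0.ne'
  have hΦ := (st18_hasDerivAt_Phi ε b θ hb2 hb0 hb1).const_mul ((1 + 6*(1-ε^2) + (1-ε^2)^2)/(8*b))
  have hsc := (Real.hasDerivAt_sin θ).mul (Real.hasDerivAt_cos θ)
  have hB := (hsc.div (st18_hasDerivAt_u ε θ) hu0.ne').const_mul (ε^2*(1+(1-ε^2))/8)
  have hC := (hsc.div ((st18_hasDerivAt_u ε θ).pow 2) hu20).const_mul ((1-ε^2)*ε^2/4)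
  have h := (hΦ.add hB).sub hC
  refine h.congr_deriv (Eq.symm ?_)
  simp only [Pi.mul_apply, Pi.div_apply, Pi.pow_apply]
  field_simp
  ring_nf
  simp only [hsq, show Real.sin θ ^ 4 = (1 - Real.cos θ ^ 2) ^ 2 by rw [← hsq]; ring]
  ring


/-- for the radius function `R(θ) = √(1−ε²)/√(1−ε² cos²θ)` of the ellipse of
eccentricity `ε ∈ [0,1)`, one has `1 + (1/2π)∫₀^{2π} (R′/R)² dθ = (1 − ε²/2)/√(1 − ε²)` and
`(1/2π)∫₀^{2π} (R² + R′²) dθ = (1 − ε² + ε⁴/8)/√(1 − ε²)`. -/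
theorem stmt_18 (ε : ℝ) (hε0 : 0 ≤ ε) (hε1 : ε < 1) :
    let R : ℝ → ℝ := fun θ => Real.sqrt (1 - ε^2) / Real.sqrt (1 - ε^2 * Real.cos θ ^ 2)
    1 + (1/(2*π)) * (∫ θ in (0:ℝ)..(2*π), (deriv R θ / R θ)^2)
      = (1 - ε^2/2) / Real.sqrt (1 - ε^2) ∧
    (1/(2*π)) * (∫ θ in (0:ℝ)..(2*π), ((R θ)^2 + (deriv R θ)^2))
      = (1 - ε^2 + ε^4/8) / Real.sqrt (1 - ε^2) := by
  intro R
  have ha : 0 < 1 - ε^2 := by nlinarith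
  set b : ℝ := Real.sqrt (1 - ε^2) with hbdef
  have hb0 : 0 < b := Real.sqrt_pos.2 ha
  have hb2 : b^2 = 1 - ε^2 := Real.sq_sqrt ha.le
  have hb1 : b ≤ 1 := by
    rw [hbdef]
    exact Real.sqrt_le_one.mpr (by nlinarith)
  have hπ : (0:ℝ) < π := Real.pi_pos
  -- derivative of R
  have hdR : ∀ θ : ℝ, deriv R θ = -(b * (ε^2 * Real.cos θ * Real.sin θ)) /
      (Real.sqrt (1 - ε^2 * Real.cos θ ^ 2) * (1 - ε^2 * Real.cos θ ^ 2)) :=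
    fun θ => (st18_hasDerivAt_R ε θ hε0 hε1).deriv
  have hu0 : ∀ θ : ℝ, 0 < 1 - ε^2 * Real.cos θ ^ 2 := st18_u_pos ε hε0 hε1
  have hS0 : ∀ θ : ℝ, 0 < Real.sqrt (1 - ε^2 * Real.cos θ ^ 2) :=
    fun θ => Real.sqrt_pos.2 (hu0 θ)
  have hS2 : ∀ θ : ℝ, Real.sqrt (1 - ε^2 * Real.cos θ ^ 2) ^ 2 = 1 - ε^2 * Real.cos θ ^ 2 :=
    fun θ => Real.sq_sqrt (hu0 θ).le
  constructor
  · have hcongr : (∫ θ in (0:ℝ)..(2*π), (deriv R θ / R θ)^2)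
        = ∫ θ in (0:ℝ)..(2*π),
          ε^4 * (Real.cos θ * Real.sin θ)^2 / (1 - ε^2 * Real.cos θ ^ 2)^2 := by
      apply intervalIntegral.integral_congr
      intro θ _
      show (deriv R θ / R θ)^2 = _
      have hRθ : R θ = b / Real.sqrt (1 - ε^2 * Real.cos θ ^ 2) := rfl
      rw [hdR θ, hRθ]
      have e : (-(b * (ε^2 * Real.cos θ * Real.sin θ)) /
          (Real.sqrt (1 - ε^2 * Real.cos θ ^ 2) * (1 - ε^2 * Real.cos θ ^ 2))) /
          (b / Real.sqrt (1 - ε^2 * Real.cos θ ^ 2))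
          = -(ε^2 * Real.cos θ * Real.sin θ) / (1 - ε^2 * Real.cos θ ^ 2) := by
        have h2 := (hS0 θ).ne'
        have h3 := (hu0 θ).ne'
        field_simp
      rw [e, div_pow]
      ring
    rw [hcongr]
    have hFTC := intervalIntegral.integral_eq_sub_of_hasDerivAt
      (f := fun t => (1+(1-ε^2))/(2*b) * (t - Real.arctan ((b-1) * (Real.sin t * Real.cos t) /
          (1 - Real.cos t ^ 2 + b * Real.cos t ^ 2)))
        - t - ε^2/2 * (Real.sin t * Real.cos t / (1 - ε^2 * Real.cos t ^ 2)))
      (f' := fun θ => ε^4 * (Real.cos θ * Real.sin θ)^2 / (1 - ε^2 * Real.cos θ ^ 2)^2)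
      (a := 0) (b := 2*π)
      (fun x _ => st18_F1 ε b x hε0 hε1 hb2 hb0 hb1)
      (by
        apply Continuous.intervalIntegrable
        apply Continuous.div (by fun_prop) (by fun_prop)
        exact fun θ => pow_ne_zero 2 (hu0 θ).ne')
    rw [hFTC]
    simp [Real.sin_two_pi, Real.cos_two_pi, Real.sin_zero, Real.cos_zero]
    field_simp
    ring
  · have hcongr : (∫ θ in (0:ℝ)..(2*π), ((R θ)^2 + (deriv R θ)^2))
        = ∫ θ in (0:ℝ)..(2*π),
          ((1-ε^2) / (1 - ε^2 * Real.cos θ ^ 2)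
            + (1-ε^2) * ε^4 * (Real.cos θ * Real.sin θ)^2 / (1 - ε^2 * Real.cos θ ^ 2)^3) := by
      apply intervalIntegral.integral_congr
      intro θ _
      show (R θ)^2 + (deriv R θ)^2 = _
      have hRθ : R θ = b / Real.sqrt (1 - ε^2 * Real.cos θ ^ 2) := rfl
      rw [hdR θ, hRθ]
      rw [div_pow, div_pow, show (-(b * (ε^2 * Real.cos θ * Real.sin θ)))^2
          = b^2 * (ε^2 * Real.cos θ * Real.sin θ)^2 from by ring,
        show (Real.sqrt (1 - ε^2 * Real.cos θ ^ 2) * (1 - ε^2 * Real.cos θ ^ 2))^2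
          = Real.sqrt (1 - ε^2 * Real.cos θ ^ 2)^2 * (1 - ε^2 * Real.cos θ ^ 2)^2 from by ring,
        hS2 θ, hb2]
      have h3 := (hu0 θ).ne'
      field_simp
    rw [hcongr]
    have hFTC := intervalIntegral.integral_eq_sub_of_hasDerivAt
      (f := fun t => (1 + 6*(1-ε^2) + (1-ε^2)^2)/(8*b)
          * (t - Real.arctan ((b-1) * (Real.sin t * Real.cos t) /
            (1 - Real.cos t ^ 2 + b * Real.cos t ^ 2)))
        + ε^2*(1+(1-ε^2))/8 * (Real.sin t * Real.cos t / (1 - ε^2 * Real.cos t ^ 2))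
        - (1-ε^2)*ε^2/4 * (Real.sin t * Real.cos t / (1 - ε^2 * Real.cos t ^ 2)^2))
      (f' := fun θ => (1-ε^2) / (1 - ε^2 * Real.cos θ ^ 2)
            + (1-ε^2) * ε^4 * (Real.cos θ * Real.sin θ)^2 / (1 - ε^2 * Real.cos θ ^ 2)^3)
      (a := 0) (b := 2*π)
      (fun x _ => st18_F2 ε b x hε0 hε1 hb2 hb0 hb1)
      (by
        apply Continuous.intervalIntegrable
        apply Continuous.add
        · exact Continuous.div (by fun_prop) (by fun_prop)
            (fun θ => (hu0 θ).ne')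
        · exact Continuous.div (by fun_prop) (by fun_prop)
            (fun θ => pow_ne_zero 3 (hu0 θ).ne'))
    rw [hFTC]
    simp [Real.sin_two_pi, Real.cos_two_pi, Real.sin_zero, Real.cos_zero]
    field_simp
    ring
end
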